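/- arXiv:1810.10692 — 7 statements merged into one kernel-verified Lean document; each statement's English description precedes it below -/
import Mathlib

section
/- Let a, b, r be positive real numbers and let s be a real number with s > r. Then the integral \(\int_0^{\infty} t^{s-1} \frac{e^{-bt}}{(1+e^{-at})^{r}}\,dt\) is finite and equals \(a^{-s}\,\Gamma(s)\,\sum_{k=0}^{\infty} \frac{\Gamma(r+k)}{\Gamma(r)\,k!}\,\frac{(-1)^{k}}{(k+b/a)^{s}}\), where the series converges absolutely. -/
open Real MeasureTheory Set Filter

lemma gamma_int {p c : ℝ} (hp : 0 < p) (hc : 0 < c) :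
    ∫ x in Ioi (0:ℝ), x ^ (p - 1) * Real.exp (-(c * x)) = Real.Gamma p * c ^ (-p) := by
  have h := integral_rpow_mul_exp_neg_mul_rpow (p := 1) (q := p - 1) (b := c)
    one_pos (by linarith) hc
  simp only [Real.rpow_one, sub_add_cancel, div_one, neg_mul] at h
  rw [h]; ring

lemma gamma_int_integrable {p c : ℝ} (hp : 0 < p) (hc : 0 < c) :
    IntegrableOn (fun x : ℝ => x ^ (p - 1) * Real.exp (-(c * x))) (Ioi 0) volume := by
  have h := integrableOn_rpow_mul_exp_neg_mul_rpow (p := 1) (s := p - 1) (b := c)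
    (by linarith) one_pos hc
  refine h.congr_fun (fun x hx => ?_) measurableSet_Ioi
  simp only [Real.rpow_one]; ring_nf

noncomputable def dcoef (r : ℝ) (k : ℕ) : ℝ :=
  Real.Gamma (r + k) / (Real.Gamma r * (k.factorial : ℝ))

lemma dcoef_pos {r : ℝ} (hr : 0 < r) (k : ℕ) : 0 < dcoef r k := by
  have h1 : 0 < Real.Gamma (r + k) := Real.Gamma_pos_of_pos (by positivity)
  have h2 : 0 < Real.Gamma r := Real.Gamma_pos_of_pos hr
  have h3 : 0 < (k.factorial : ℝ) := by positivity
  exact div_pos h1 (mul_pos h2 h3)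

lemma dcoef_succ {r : ℝ} (hr : 0 < r) (k : ℕ) :
    dcoef r (k + 1) = dcoef r k * ((r + k) / (k + 1)) := by
  have hne : r + (k:ℝ) ≠ 0 := by positivity
  have h1 : Real.Gamma (r + (k+1:ℕ)) = (r + k) * Real.Gamma (r + k) := by
    push_cast
    rw [show r + ((k:ℝ) + 1) = (r + k) + 1 by ring, Real.Gamma_add_one hne]
  have h2 : ((k+1).factorial : ℝ) = (k + 1) * k.factorial := by
    rw [Nat.factorial_succ]; push_cast; ring
  have h2' : 0 < Real.Gamma r := Real.Gamma_pos_of_pos hr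
  have h3 : (k.factorial : ℝ) ≠ 0 := by positivity
  rw [dcoef, dcoef, h1, h2]
  field_simp

lemma dcoef_eq {r : ℝ} (hr : 0 < r) (k : ℕ) :
    Real.Gamma (r + k) = Real.Gamma r * dcoef r k * k.factorial := by
  have h2 : 0 < Real.Gamma r := Real.Gamma_pos_of_pos hr
  have h3 : (k.factorial : ℝ) ≠ 0 := by positivity
  rw [dcoef]; field_simp

lemma summable_dcoef_mul_pow {r y : ℝ} (hr : 0 < r) (hy : |y| < 1) :
    Summable (fun k : ℕ => dcoef r k * y ^ k) := by
  set l : ℝ := (1 + |y|) / 2 with hl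
  have hl1 : l < 1 := by rw [hl]; linarith [hy]
  have hyl : |y| < l := by rw [hl]; linarith [hy]
  apply summable_of_ratio_norm_eventually_le hl1
  have htend : Tendsto (fun k : ℕ => |y| * ((r + k) / (k + 1))) atTop (nhds (|y| * 1)) := by
    apply Tendsto.const_mul
    have heq : (fun k : ℕ => (r + (k:ℝ)) / ((k:ℝ) + 1)) = fun k : ℕ => (r - 1) / ((k:ℝ) + 1) + 1 := by
      funext k
      have : ((k:ℝ) + 1) ≠ 0 := by positivity
      field_simp
      ring
    rw [heq]
    have h0 : Tendsto (fun k : ℕ => (r - 1) / ((k:ℝ) + 1)) atTop (nhds 0) :=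
      Tendsto.div_atTop tendsto_const_nhds
        (tendsto_atTop_add_const_right _ 1 tendsto_natCast_atTop_atTop)
    simpa using h0.add tendsto_const_nhds
  rw [mul_one] at htend
  filter_upwards [htend.eventually_le_const hyl] with k hk
  have hd := dcoef_pos hr
  have hrk : 0 < (r + (k:ℝ)) / ((k:ℝ) + 1) := by positivity
  have hdk1 : dcoef r (k+1) = dcoef r k * ((r + k) / (k + 1)) := dcoef_succ hr k
  have h1 : ‖dcoef r (k+1) * y ^ (k+1)‖ = (dcoef r k * |y|^k) * (|y| * ((r+k)/(k+1))) := by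
    rw [hdk1, pow_succ, norm_mul, Real.norm_eq_abs, Real.norm_eq_abs,
      abs_of_pos (mul_pos (hd k) hrk), abs_mul, abs_pow]
    ring
  have h2 : ‖dcoef r k * y ^ k‖ = dcoef r k * |y|^k := by
    rw [norm_mul, Real.norm_eq_abs, Real.norm_eq_abs, abs_of_pos (hd k), abs_pow]
  rw [h1, h2]
  calc (dcoef r k * |y|^k) * (|y| * ((r+k)/(k+1)))
      ≤ (dcoef r k * |y|^k) * l := mul_le_mul_of_nonneg_left hk (mul_nonneg (hd k).le (by positivity))
    _ = l * (dcoef r k * |y|^k) := mul_comm _ _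

lemma gamma_int_one {p : ℝ} (hp : 0 < p) :
    ∫ x in Ioi (0:ℝ), x ^ (p - 1) * Real.exp (-x) = Real.Gamma p := by
  have h := gamma_int hp one_pos
  simpa using h

lemma gamma_int_one_integrable {p : ℝ} (hp : 0 < p) :
    IntegrableOn (fun x : ℝ => x ^ (p - 1) * Real.exp (-x)) (Ioi 0) volume := by
  have h := gamma_int_integrable hp one_pos
  simpa using h

lemma hasSum_binomial {r y : ℝ} (hr : 0 < r) (hy : |y| < 1) :
    HasSum (fun k : ℕ => dcoef r k * y ^ k) ((1 - y) ^ (-r) : ℝ) := by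
  obtain ⟨hy1, hy2⟩ := abs_lt.mp hy
  have h1y : 0 < 1 - y := by linarith
  have hΓr : 0 < Real.Gamma r := Real.Gamma_pos_of_pos hr
  set f : ℕ → ℝ → ℝ := fun k u => (y ^ k / k.factorial) * (u ^ (r + k - 1) * Real.exp (-u))
    with hf
  -- pointwise identity
  have hpt : ∀ u ∈ Ioi (0:ℝ), ∑' k, f k u = u ^ (r - 1) * Real.exp (-((1 - y) * u)) := by
    intro u hu
    have hu0 : (0:ℝ) < u := hu
    have hexp : Real.exp (y * u) = ∑' k : ℕ, (y * u) ^ k / k.factorial := by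
      rw [Real.exp_eq_exp_ℝ, NormedSpace.exp_eq_tsum_div]
    have hfe : ∀ k : ℕ, f k u = (u ^ (r - 1) * Real.exp (-u)) * ((y * u) ^ k / k.factorial) := by
      intro k
      have : u ^ (r + k - 1) = u ^ (r - 1) * u ^ k := by
        rw [show r + (k:ℝ) - 1 = (r - 1) + k by ring, Real.rpow_add hu0, Real.rpow_natCast]
      rw [hf]; simp only []
      rw [this, mul_pow]
      field_simp
    calc ∑' k, f k u = ∑' k, (u ^ (r - 1) * Real.exp (-u)) * ((y * u) ^ k / k.factorial) := by
          exact tsum_congr hfe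
      _ = (u ^ (r - 1) * Real.exp (-u)) * ∑' k : ℕ, (y * u) ^ k / k.factorial := tsum_mul_left
      _ = (u ^ (r - 1) * Real.exp (-u)) * Real.exp (y * u) := by rw [← hexp]
      _ = u ^ (r - 1) * Real.exp (-((1 - y) * u)) := by
          rw [mul_assoc, ← Real.exp_add]; ring_nf
  -- integral of each term
  have hint : ∀ k : ℕ, ∫ u in Ioi (0:ℝ), f k u = (y ^ k / k.factorial) * Real.Gamma (r + k) := by
    intro k
    rw [hf]; simp only []
    rw [MeasureTheory.integral_const_mul, gamma_int_one (by positivity)]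
  have hintabs : ∀ k : ℕ, ∫ u in Ioi (0:ℝ),
      (|y| ^ k / k.factorial) * (u ^ (r + (k:ℝ) - 1) * Real.exp (-u)) =
      (|y| ^ k / k.factorial) * Real.Gamma (r + k) := by
    intro k
    rw [MeasureTheory.integral_const_mul, gamma_int_one (by positivity)]
  -- measurability
  have hmeas : ∀ k : ℕ, AEStronglyMeasurable (f k) (volume.restrict (Ioi 0)) := by
    intro k
    refine ContinuousOn.aestronglyMeasurable ?_ measurableSet_Ioi
    exact continuousOn_const.mul
      ((continuousOn_id.rpow_const (fun x hx => Or.inl (ne_of_gt hx))).mul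
        (Real.continuous_exp.comp continuous_neg).continuousOn)
  -- integrability of absolute values
  have habs_int : ∀ k : ℕ, IntegrableOn
      (fun u : ℝ => (|y| ^ k / k.factorial) * (u ^ (r + (k:ℝ) - 1) * Real.exp (-u))) (Ioi 0) := by
    intro k
    exact (gamma_int_one_integrable (p := r + k) (by positivity)).const_mul _
  have hnn : ∀ k : ℕ, 0 ≤ᵐ[volume.restrict (Ioi 0)]
      (fun u : ℝ => (|y| ^ k / k.factorial) * (u ^ (r + (k:ℝ) - 1) * Real.exp (-u))) := by
    intro k
    filter_upwards [ae_restrict_mem measurableSet_Ioi] with u hu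
    have hu0 : (0:ℝ) < u := hu
    have h1 : (0:ℝ) ≤ u ^ (r + (k:ℝ) - 1) := Real.rpow_nonneg hu0.le _
    positivity
  have hlint : ∀ k : ℕ, (∫⁻ u in Ioi (0:ℝ), ‖f k u‖₊) =
      ENNReal.ofReal ((|y| ^ k / k.factorial) * Real.Gamma (r + k)) := by
    intro k
    rw [← hintabs k, ofReal_integral_eq_lintegral_ofReal (habs_int k) (hnn k)]
    apply lintegral_congr_ae
    filter_upwards [ae_restrict_mem measurableSet_Ioi] with u hu
    have hu0 : (0:ℝ) < u := hu
    rw [← enorm_eq_nnnorm, ← ofReal_norm]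
    congr 1
    rw [hf]; simp only []
    rw [norm_mul, Real.norm_eq_abs, Real.norm_eq_abs, abs_div, abs_pow, Nat.abs_cast,
      abs_mul, abs_of_nonneg (Real.rpow_nonneg hu0.le _), abs_of_pos (Real.exp_pos _)]
  have hcval : ∀ z : ℝ, ∀ k : ℕ, (z ^ k / k.factorial) * Real.Gamma (r + k) =
      Real.Gamma r * (dcoef r k * z ^ k) := by
    intro z k
    rw [dcoef_eq hr k]
    have h3 : (k.factorial : ℝ) ≠ 0 := by positivity
    field_simp
  have hsumc : Summable (fun k : ℕ => Real.Gamma r * (dcoef r k * |y| ^ k)) :=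
    (summable_dcoef_mul_pow hr (by rwa [abs_abs])).mul_left _
  have hne : (∑' k : ℕ, ∫⁻ u in Ioi (0:ℝ), ‖f k u‖₊) ≠ ⊤ := by
    simp_rw [hlint, hcval]
    rw [← ENNReal.ofReal_tsum_of_nonneg
      (fun k => mul_nonneg hΓr.le (mul_nonneg (dcoef_pos hr k).le (by positivity))) hsumc]
    exact ENNReal.ofReal_ne_top
  have hswap := MeasureTheory.integral_tsum hmeas hne
  have hL : ∫ u in Ioi (0:ℝ), u ^ (r - 1) * Real.exp (-((1 - y) * u)) =
      ∑' k : ℕ, ∫ u in Ioi (0:ℝ), f k u := by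
    rw [← hswap]
    exact setIntegral_congr_fun measurableSet_Ioi fun u hu => (hpt u hu).symm
  have hG : ∫ u in Ioi (0:ℝ), u ^ (r - 1) * Real.exp (-((1 - y) * u)) =
      Real.Gamma r * (1 - y) ^ (-r) := gamma_int hr h1y
  have hsum2 : Summable (fun k : ℕ => dcoef r k * y ^ k) := summable_dcoef_mul_pow hr hy
  refine hsum2.hasSum_iff.mpr ?_
  have hkey : Real.Gamma r * ∑' k : ℕ, dcoef r k * y ^ k =
      Real.Gamma r * (1 - y) ^ (-r) := by
    rw [← hG, hL, ← tsum_mul_left]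
    exact tsum_congr fun k => by rw [hint k, hcval y k]
  exact mul_left_cancel₀ (ne_of_gt hΓr) hkey

lemma one_sub_exp_neg_pos {u : ℝ} (hu : 0 < u) : 0 < 1 - Real.exp (-u) := by
  have := Real.exp_lt_one_iff.mpr (neg_lt_zero.mpr hu)
  linarith

lemma one_sub_exp_neg_ge {u : ℝ} (hu : 0 ≤ u) : u * Real.exp (-u) ≤ 1 - Real.exp (-u) := by
  have h := Real.add_one_le_exp u
  have he : 0 < Real.exp (-u) := Real.exp_pos _
  have : (u + 1) * Real.exp (-u) ≤ Real.exp u * Real.exp (-u) :=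
    mul_le_mul_of_nonneg_right h he.le
  rw [← Real.exp_add, add_neg_cancel, Real.exp_zero] at this
  nlinarith

-- integrability of the dominating function
lemma integrableG {r s c : ℝ} (hr : 0 < r) (hs : r < s) (hc : 0 < c) :
    IntegrableOn (fun u : ℝ =>
      u ^ (s - 1) * Real.exp (-(c * u)) * (1 - Real.exp (-u)) ^ (-r)) (Ioi 0) volume := by
  have hs0 : 0 < s := hr.trans hs
  have hcontG : ContinuousOn (fun u : ℝ =>
      u ^ (s - 1) * Real.exp (-(c * u)) * (1 - Real.exp (-u)) ^ (-r)) (Ioi 0) := by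
    apply ContinuousOn.mul
    · exact (continuousOn_id.rpow_const (fun x hx => Or.inl (ne_of_gt hx))).mul
        (Real.continuous_exp.comp (continuous_const.mul continuous_id).neg).continuousOn
    · exact ((continuous_const.sub (Real.continuous_exp.comp continuous_neg)).continuousOn).rpow_const
        (fun x hx => Or.inl (ne_of_gt (one_sub_exp_neg_pos hx)))
  rw [← Ioc_union_Ioi_eq_Ioi (zero_le_one (α := ℝ))]
  apply IntegrableOn.union
  · -- on Ioc 0 1
    have hmaj : IntegrableOn (fun u : ℝ => Real.exp r * u ^ (s - r - 1)) (Ioc 0 1) volume := by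
      have h := (intervalIntegrable_iff_integrableOn_Ioc_of_le (zero_le_one (α := ℝ))).mp
        (intervalIntegral.intervalIntegrable_rpow' (a := 0) (b := 1) (r := s - r - 1)
          (by linarith))
      exact h.const_mul _
    apply Integrable.mono' hmaj
    · exact (hcontG.mono Ioc_subset_Ioi_self).aestronglyMeasurable measurableSet_Ioc
    · filter_upwards [ae_restrict_mem measurableSet_Ioc] with u hu
      obtain ⟨hu0, hu1⟩ := hu
      have h1 : 0 < 1 - Real.exp (-u) := one_sub_exp_neg_pos hu0
      have h2 : (1 - Real.exp (-u)) ^ (-r) ≤ (u * Real.exp (-u)) ^ (-r) :=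
        rpow_le_rpow_of_nonpos (by positivity) (one_sub_exp_neg_ge hu0.le) (by linarith)
      have h3 : (u * Real.exp (-u)) ^ (-r) = u ^ (-r) * Real.exp (r * u) := by
        rw [Real.mul_rpow hu0.le (Real.exp_pos _).le, ← Real.exp_mul]
        ring_nf
      have h4 : Real.exp (r * u) ≤ Real.exp r := by
        apply Real.exp_le_exp.mpr; nlinarith
      have h5 : Real.exp (-(c * u)) ≤ 1 := Real.exp_le_one_iff.mpr (by nlinarith)
      have hnn : 0 ≤ u ^ (s - 1) := Real.rpow_nonneg hu0.le _
      rw [Real.norm_eq_abs, abs_of_nonneg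
        (mul_nonneg (mul_nonneg hnn (Real.exp_pos _).le)
          (Real.rpow_nonneg h1.le _))]
      calc u ^ (s - 1) * Real.exp (-(c * u)) * (1 - Real.exp (-u)) ^ (-r)
          ≤ u ^ (s - 1) * 1 * (u ^ (-r) * Real.exp (r * u)) := by
            apply mul_le_mul (by nlinarith [Real.exp_pos (-(c*u))]) (h2.trans (le_of_eq h3))
              (by positivity) (by positivity)
        _ = (u ^ (s - 1) * u ^ (-r)) * Real.exp (r * u) := by ring
        _ ≤ (u ^ (s - 1) * u ^ (-r)) * Real.exp r := by
            apply mul_le_mul_of_nonneg_left h4 (by positivity)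
        _ = Real.exp r * u ^ (s - r - 1) := by
            rw [← Real.rpow_add hu0]; ring_nf
  · -- on Ioi 1
    set K : ℝ := (1 - Real.exp (-1)) ^ (-r) with hK
    have hmaj : IntegrableOn (fun u : ℝ => K * (u ^ (s - 1) * Real.exp (-(c * u)))) (Ioi 1) volume :=
      MeasureTheory.IntegrableOn.mono_set ((gamma_int_integrable hs0 hc).const_mul K)
        (Ioi_subset_Ioi zero_le_one)
    apply Integrable.mono' hmaj
    · exact (hcontG.mono (Ioi_subset_Ioi zero_le_one)).aestronglyMeasurable measurableSet_Ioi
    · filter_upwards [ae_restrict_mem measurableSet_Ioi] with u hu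
      have hu1 : (1:ℝ) < u := hu
      have hu0 : (0:ℝ) < u := by linarith
      have h1 : 0 < 1 - Real.exp (-1 : ℝ) := one_sub_exp_neg_pos one_pos
      have h2 : (1 - Real.exp (-u)) ^ (-r) ≤ K := by
        rw [hK]
        apply rpow_le_rpow_of_nonpos h1 _ (by linarith)
        have : Real.exp (-u) ≤ Real.exp (-1) := Real.exp_le_exp.mpr (by linarith)
        linarith
      have hnn : 0 ≤ u ^ (s - 1) := Real.rpow_nonneg hu0.le _
      rw [Real.norm_eq_abs, abs_of_nonneg
        (mul_nonneg (mul_nonneg hnn (Real.exp_pos _).le)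
          (Real.rpow_nonneg (one_sub_exp_neg_pos hu0).le _))]
      calc u ^ (s - 1) * Real.exp (-(c * u)) * (1 - Real.exp (-u)) ^ (-r)
          ≤ u ^ (s - 1) * Real.exp (-(c * u)) * K := by
            apply mul_le_mul_of_nonneg_left h2 (by positivity)
        _ = K * (u ^ (s - 1) * Real.exp (-(c * u))) := by ring

lemma summable_target {r s c : ℝ} (hr : 0 < r) (hs : r < s) (hc : 0 < c) :
    Summable (fun k : ℕ => dcoef r k * ((k:ℝ) + c) ^ (-s)) := by
  have hs0 : 0 < s := hr.trans hs
  have hΓs : 0 < Real.Gamma s := Real.Gamma_pos_of_pos hs0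
  set F : ℕ → ℝ → ℝ :=
    fun k u => dcoef r k * (u ^ (s - 1) * Real.exp (-((c + k) * u))) with hF
  set G : ℝ → ℝ :=
    fun u => u ^ (s - 1) * Real.exp (-(c * u)) * (1 - Real.exp (-u)) ^ (-r) with hG
  have hck : ∀ k : ℕ, (0:ℝ) < c + k := fun k => by positivity
  have hFint : ∀ k, IntegrableOn (F k) (Ioi 0) volume := fun k =>
    (gamma_int_integrable hs0 (hck k)).const_mul _
  have hFnn : ∀ k, 0 ≤ᵐ[volume.restrict (Ioi 0)] F k := by
    intro k
    filter_upwards [ae_restrict_mem measurableSet_Ioi] with u hu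
    have hu0 : (0:ℝ) < u := hu
    exact mul_nonneg (dcoef_pos hr k).le
      (mul_nonneg (Real.rpow_nonneg hu0.le _) (Real.exp_pos _).le)
  have hFval : ∀ k, ∫ u in Ioi (0:ℝ), F k u =
      dcoef r k * (Real.Gamma s * (c + k) ^ (-s)) := by
    intro k
    rw [hF]; simp only []
    rw [MeasureTheory.integral_const_mul, gamma_int hs0 (hck k)]
  have hFlint : ∀ k, (∫⁻ u in Ioi (0:ℝ), ENNReal.ofReal (F k u)) =
      ENNReal.ofReal (dcoef r k * (Real.Gamma s * (c + k) ^ (-s))) := by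
    intro k
    rw [← hFval k, ofReal_integral_eq_lintegral_ofReal (hFint k) (hFnn k)]
  have hFmeas : ∀ k, AEMeasurable (fun u => ENNReal.ofReal (F k u))
      (volume.restrict (Ioi 0)) := by
    intro k
    apply ENNReal.measurable_ofReal.comp_aemeasurable
    have hcont : ContinuousOn (F k) (Ioi 0) :=
      continuousOn_const.mul
        ((continuousOn_id.rpow_const (fun x hx => Or.inl (ne_of_gt hx))).mul
          (Real.continuous_exp.comp (continuous_const.mul continuous_id).neg).continuousOn)
    exact hcont.aemeasurable measurableSet_Ioi
  have hGnn : 0 ≤ᵐ[volume.restrict (Ioi 0)] G := by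
    filter_upwards [ae_restrict_mem measurableSet_Ioi] with u hu
    have hu0 : (0:ℝ) < u := hu
    exact mul_nonneg (mul_nonneg (Real.rpow_nonneg hu0.le _) (Real.exp_pos _).le)
      (Real.rpow_nonneg (one_sub_exp_neg_pos hu0).le _)
  have hpt : ∀ u ∈ Ioi (0:ℝ), (∑' k, ENNReal.ofReal (F k u)) = ENNReal.ofReal (G u) := by
    intro u hu
    have hu0 : (0:ℝ) < u := hu
    have hlt : |Real.exp (-u)| < 1 := by
      rw [abs_of_pos (Real.exp_pos _)]
      exact Real.exp_lt_one_iff.mpr (by linarith)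
    have hbin := hasSum_binomial hr hlt
    have hbin2 : HasSum (fun k => F k u) (G u) := by
      have h := hbin.mul_left (u ^ (s - 1) * Real.exp (-(c * u)))
      have heq : ∀ k : ℕ, u ^ (s - 1) * Real.exp (-(c * u)) *
          (dcoef r k * Real.exp (-u) ^ k) = F k u := by
        intro k
        rw [hF]; simp only []
        rw [show -((c + (k:ℕ)) * u) = -(c * u) + (k:ℕ) * (-u) by push_cast; ring,
          Real.exp_add, Real.exp_nat_mul]
        ring
      have heq2 : u ^ (s - 1) * Real.exp (-(c * u)) * (1 - Real.exp (-u)) ^ (-r) = G u := rfl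
      rw [← heq2]
      exact HasSum.congr_fun h (fun k => (heq k).symm)
    have hFnnu : ∀ k : ℕ, 0 ≤ F k u := by
      intro k
      exact mul_nonneg (dcoef_pos hr k).le
        (mul_nonneg (Real.rpow_nonneg hu0.le _) (Real.exp_pos _).le)
    rw [← ENNReal.ofReal_tsum_of_nonneg hFnnu hbin2.summable, hbin2.tsum_eq]
  have key : (∑' k : ℕ, ENNReal.ofReal (dcoef r k * (Real.Gamma s * (c + k) ^ (-s)))) ≠ ⊤ := by
    simp_rw [← hFlint]
    rw [← MeasureTheory.lintegral_tsum hFmeas]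
    have heq : (∫⁻ u in Ioi (0:ℝ), ∑' k, ENNReal.ofReal (F k u)) =
        ∫⁻ u in Ioi (0:ℝ), ENNReal.ofReal (G u) := by
      apply lintegral_congr_ae
      filter_upwards [ae_restrict_mem measurableSet_Ioi] with u hu
      exact hpt u hu
    rw [heq, ← ofReal_integral_eq_lintegral_ofReal (integrableG hr hs hc) hGnn]
    exact ENNReal.ofReal_ne_top
  set av : ℕ → ℝ := fun k => dcoef r k * (Real.Gamma s * (c + k) ^ (-s)) with hav
  have hann : ∀ k, 0 ≤ av k := fun k =>
    mul_nonneg (dcoef_pos hr k).le (mul_nonneg hΓs.le (Real.rpow_nonneg (hck k).le _))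
  have hsumnn : Summable (fun k => (av k).toNNReal) := by
    rw [← ENNReal.tsum_coe_ne_top_iff_summable]
    exact key
  have hsa : Summable av := by
    have h := NNReal.summable_coe.mpr hsumnn
    exact h.congr (fun k => Real.coe_toNNReal _ (hann k))
  have h2 := hsa.mul_left (Real.Gamma s)⁻¹
  refine h2.congr (fun k => ?_)
  rw [hav]; simp only []
  rw [add_comm c (k:ℝ)]
  field_simp

/-- For `a, b, r > 0` and `s > r`, the integral
`∫_0^∞ t^(s-1) e^(-bt)/(1+e^(-at))^r dt` is finite and equals
`a^(-s) Γ(s) ∑_{k≥0} (Γ(r+k)/(Γ(r) k!)) (-1)^k / (k + b/a)^s`,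
the series converging absolutely. -/
theorem normalizing_integral_eq_hurwitz_lerch
    (a b r s : ℝ) (ha : 0 < a) (hb : 0 < b) (hr : 0 < r) (hs : r < s) :
    IntegrableOn
      (fun t : ℝ => t ^ (s - 1) * (Real.exp (-(b * t)) / (1 + Real.exp (-(a * t))) ^ r))
      (Ioi 0) volume ∧
    Summable (fun k : ℕ =>
      |Real.Gamma (r + (k : ℝ)) / (Real.Gamma r * (k.factorial : ℝ)) *
        ((-1 : ℝ) ^ k / ((k : ℝ) + b / a) ^ s)|) ∧
    ∫ t in Ioi (0 : ℝ),
        t ^ (s - 1) * (Real.exp (-(b * t)) / (1 + Real.exp (-(a * t))) ^ r) =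
      a ^ (-s) * Real.Gamma s *
        ∑' k : ℕ, Real.Gamma (r + (k : ℝ)) / (Real.Gamma r * (k.factorial : ℝ)) *
          ((-1 : ℝ) ^ k / ((k : ℝ) + b / a) ^ s) := by
  have hs0 : 0 < s := hr.trans hs
  have hc : 0 < b / a := div_pos hb ha
  set c : ℝ := b / a with hcdef
  set f : ℝ → ℝ :=
    fun t => t ^ (s - 1) * (Real.exp (-(b * t)) / (1 + Real.exp (-(a * t))) ^ r) with hfdef
  -- basic positivity facts
  have hbase : ∀ t : ℝ, (0:ℝ) < 1 + Real.exp (-(a * t)) := fun t => by positivity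
  have hbase1 : ∀ t : ℝ, (1:ℝ) ≤ 1 + Real.exp (-(a * t)) := fun t => by
    nlinarith [Real.exp_pos (-(a * t))]
  have hden1 : ∀ t : ℝ, (1:ℝ) ≤ (1 + Real.exp (-(a * t))) ^ r := fun t =>
    Real.one_le_rpow (hbase1 t) hr.le
  have hfnn : ∀ t : ℝ, 0 < t → 0 ≤ f t := by
    intro t ht
    have := Real.rpow_nonneg ht.le (s - 1)
    have h2 := (hbase t).le
    have : (0:ℝ) ≤ (1 + Real.exp (-(a * t))) ^ r := Real.rpow_nonneg h2 r
    rw [hfdef]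
    positivity
  -- continuity of f on Ioi 0
  have hfcont : ContinuousOn f (Ioi 0) := by
    apply ContinuousOn.mul
    · exact continuousOn_id.rpow_const (fun x hx => Or.inl (ne_of_gt hx))
    · apply ContinuousOn.div
      · exact (Real.continuous_exp.comp (continuous_const.mul continuous_id).neg).continuousOn
      · exact ((continuous_const.add
          (Real.continuous_exp.comp (continuous_const.mul continuous_id).neg)).continuousOn).rpow_const
          (fun x _ => Or.inl (ne_of_gt (hbase x)))
      · intro x _
        exact ne_of_gt (lt_of_lt_of_le one_pos (hden1 x))
  -- Part 1 : integrability
  have hint : IntegrableOn f (Ioi 0) volume := by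
    apply Integrable.mono' (gamma_int_integrable hs0 hb)
      (hfcont.aestronglyMeasurable measurableSet_Ioi)
    filter_upwards [ae_restrict_mem measurableSet_Ioi] with t ht
    have ht0 : (0:ℝ) < t := ht
    rw [Real.norm_eq_abs, abs_of_nonneg (hfnn t ht0)]
    rw [hfdef]
    apply mul_le_mul_of_nonneg_left _ (Real.rpow_nonneg ht0.le _)
    exact div_le_self (Real.exp_pos _).le (hden1 t)
  -- identify the series terms with dcoef
  have hterm : ∀ k : ℕ,
      Real.Gamma (r + (k : ℝ)) / (Real.Gamma r * (k.factorial : ℝ)) *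
        ((-1 : ℝ) ^ k / ((k : ℝ) + c) ^ s) =
      dcoef r k * ((-1 : ℝ) ^ k / ((k : ℝ) + c) ^ s) := fun k => rfl
  have habs : ∀ k : ℕ,
      |dcoef r k * ((-1 : ℝ) ^ k / ((k : ℝ) + c) ^ s)| = dcoef r k * ((k:ℝ) + c) ^ (-s) := by
    intro k
    have hkc : (0:ℝ) < (k:ℝ) + c := by positivity
    rw [abs_mul, abs_of_pos (dcoef_pos hr k), abs_div, abs_pow, abs_neg, abs_one, one_pow,
      abs_of_pos (Real.rpow_pos_of_pos hkc s), Real.rpow_neg hkc.le, one_div]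
  -- Part 2 : summability
  have hsum : Summable (fun k : ℕ =>
      |Real.Gamma (r + (k : ℝ)) / (Real.Gamma r * (k.factorial : ℝ)) *
        ((-1 : ℝ) ^ k / ((k : ℝ) + c) ^ s)|) := by
    apply (summable_target hr hs hc).congr
    intro k
    rw [hterm k, habs k]
  refine ⟨hint, hsum, ?_⟩
  -- Part 3 : the integral identity
  set g : ℕ → ℝ → ℝ := fun k t =>
    dcoef r k * (-1 : ℝ) ^ k * (t ^ (s - 1) * Real.exp (-((b + a * k) * t))) with hgdef
  have hbak : ∀ k : ℕ, (0:ℝ) < b + a * k := fun k => by positivity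
  -- pointwise HasSum
  have hptHasSum : ∀ t ∈ Ioi (0:ℝ), HasSum (fun k => g k t) (f t) := by
    intro t ht
    have ht0 : (0:ℝ) < t := ht
    have hy : |(-Real.exp (-(a * t)))| < 1 := by
      rw [abs_neg, abs_of_pos (Real.exp_pos _)]
      exact Real.exp_lt_one_iff.mpr (by nlinarith)
    have hbin := (hasSum_binomial hr hy).mul_left (t ^ (s - 1) * Real.exp (-(b * t)))
    rw [sub_neg_eq_add] at hbin
    have heq : ∀ k : ℕ, t ^ (s - 1) * Real.exp (-(b * t)) *
        (dcoef r k * (-Real.exp (-(a * t))) ^ k) = g k t := by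
      intro k
      rw [hgdef]; simp only []
      rw [neg_pow, ← Real.exp_nat_mul,
        show -((b + a * (k:ℕ)) * t) = -(b * t) + (k:ℕ) * (-(a * t)) by push_cast; ring,
        Real.exp_add]
      ring
    have hval : t ^ (s - 1) * Real.exp (-(b * t)) * (1 + Real.exp (-(a * t))) ^ (-r) = f t := by
      rw [hfdef]; simp only []
      rw [Real.rpow_neg (hbase t).le, div_eq_mul_inv]
      ring
    rw [← hval]
    exact HasSum.congr_fun hbin (fun k => (heq k).symm)
  -- measurability of g k
  have hgmeas : ∀ k : ℕ, AEStronglyMeasurable (g k) (volume.restrict (Ioi 0)) := by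
    intro k
    refine ContinuousOn.aestronglyMeasurable ?_ measurableSet_Ioi
    exact continuousOn_const.mul
      ((continuousOn_id.rpow_const (fun x hx => Or.inl (ne_of_gt hx))).mul
        (Real.continuous_exp.comp (continuous_const.mul continuous_id).neg).continuousOn)
  -- nonnegative version and lintegral computation
  have hganorm : ∀ k : ℕ, ∀ t ∈ Ioi (0:ℝ),
      ‖g k t‖ = dcoef r k * (t ^ (s - 1) * Real.exp (-((b + a * k) * t))) := by
    intro k t ht
    have ht0 : (0:ℝ) < t := ht
    rw [hgdef]; simp only []
    rw [Real.norm_eq_abs, abs_mul, abs_mul, abs_pow, abs_neg, abs_one, one_pow, mul_one,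
      abs_of_pos (dcoef_pos hr k), abs_mul, abs_of_nonneg (Real.rpow_nonneg ht0.le _),
      abs_of_pos (Real.exp_pos _)]
  have hgabs_int : ∀ k : ℕ, IntegrableOn
      (fun t : ℝ => dcoef r k * (t ^ (s - 1) * Real.exp (-((b + a * k) * t)))) (Ioi 0) volume :=
    fun k => (gamma_int_integrable hs0 (hbak k)).const_mul _
  have hgabs_nn : ∀ k : ℕ, 0 ≤ᵐ[volume.restrict (Ioi 0)]
      (fun t : ℝ => dcoef r k * (t ^ (s - 1) * Real.exp (-((b + a * k) * t)))) := by
    intro k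
    filter_upwards [ae_restrict_mem measurableSet_Ioi] with t ht
    have ht0 : (0:ℝ) < t := ht
    exact mul_nonneg (dcoef_pos hr k).le
      (mul_nonneg (Real.rpow_nonneg ht0.le _) (Real.exp_pos _).le)
  have hgabs_val : ∀ k : ℕ,
      ∫ t in Ioi (0:ℝ), dcoef r k * (t ^ (s - 1) * Real.exp (-((b + a * k) * t))) =
      dcoef r k * (Real.Gamma s * (b + a * k) ^ (-s)) := by
    intro k
    rw [MeasureTheory.integral_const_mul, gamma_int hs0 (hbak k)]
  have hglint : ∀ k : ℕ, (∫⁻ t in Ioi (0:ℝ), ‖g k t‖₊) =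
      ENNReal.ofReal (dcoef r k * (Real.Gamma s * (b + a * k) ^ (-s))) := by
    intro k
    rw [← hgabs_val k, ofReal_integral_eq_lintegral_ofReal (hgabs_int k) (hgabs_nn k)]
    apply lintegral_congr_ae
    filter_upwards [ae_restrict_mem measurableSet_Ioi] with t ht
    rw [← enorm_eq_nnnorm, ← ofReal_norm, hganorm k t ht]
  -- rewrite (b + a k)^(-s) in terms of (k + c)^(-s)
  have hbak_eq : ∀ k : ℕ, (b + a * k) ^ (-s) = a ^ (-s) * ((k:ℝ) + c) ^ (-s) := by
    intro k
    have h1 : b + a * k = a * ((k:ℝ) + c) := by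
      rw [hcdef]; field_simp; ring
    rw [h1, Real.mul_rpow ha.le (by positivity)]
  have hw_summable : Summable (fun k : ℕ => dcoef r k * (Real.Gamma s * (b + a * k) ^ (-s))) := by
    apply ((summable_target hr hs hc).mul_left (Real.Gamma s * a ^ (-s))).congr
    intro k
    rw [hbak_eq k]
    ring
  have hglint_ne : (∑' k : ℕ, ∫⁻ t in Ioi (0:ℝ), ‖g k t‖₊) ≠ ⊤ := by
    simp_rw [hglint]
    rw [← ENNReal.ofReal_tsum_of_nonneg (fun k => mul_nonneg (dcoef_pos hr k).le
      (mul_nonneg (Real.Gamma_pos_of_pos hs0).le (Real.rpow_nonneg (hbak k).le _))) hw_summable]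
    exact ENNReal.ofReal_ne_top
  -- swap
  have hswap := MeasureTheory.integral_tsum hgmeas hglint_ne
  have hL : ∫ t in Ioi (0:ℝ), f t = ∑' k : ℕ, ∫ t in Ioi (0:ℝ), g k t := by
    rw [← hswap]
    exact setIntegral_congr_fun measurableSet_Ioi fun t ht => ((hptHasSum t ht).tsum_eq).symm
  -- value of each integral
  have hgval : ∀ k : ℕ, ∫ t in Ioi (0:ℝ), g k t =
      a ^ (-s) * Real.Gamma s * (dcoef r k * ((-1:ℝ) ^ k / ((k:ℝ) + c) ^ s)) := by
    intro k
    have hkc : (0:ℝ) < (k:ℝ) + c := by positivity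
    rw [hgdef]; simp only []
    rw [MeasureTheory.integral_const_mul, gamma_int hs0 (hbak k), hbak_eq k,
      Real.rpow_neg hkc.le]
    field_simp
  rw [hL]
  calc ∑' k : ℕ, ∫ t in Ioi (0:ℝ), g k t
      = ∑' k : ℕ, a ^ (-s) * Real.Gamma s *
          (dcoef r k * ((-1:ℝ) ^ k / ((k:ℝ) + c) ^ s)) := tsum_congr hgval
    _ = a ^ (-s) * Real.Gamma s *
          ∑' k : ℕ, dcoef r k * ((-1:ℝ) ^ k / ((k:ℝ) + c) ^ s) := tsum_mul_left
    _ = _ := by rfl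
end

section
/- Let a, b, r, s be positive real numbers and let t > 0. Then \(\int_0^{\infty} y^{s-1}\,\frac{e^{-b(t+y)}}{(1+e^{-a(t+y)})^{r}}\,dy = e^{-bt}\,a^{-s}\,\Gamma(s)\,\sum_{k=0}^{\infty} \frac{\Gamma(r+k)}{\Gamma(r)\,k!}\,\frac{(-e^{-at})^{k}}{(k+b/a)^{s}}\), where the series converges absolutely (since \(e^{-at}<1\)). -/
open Real MeasureTheory Set
open Filter Topology


lemma tendsto_ratio_aux (c d : ℝ) : Tendsto (fun k : ℕ => (c + (k:ℝ)) / (d + (k:ℝ))) atTop (𝓝 1) := by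
  have h0 : ∀ e : ℝ, Tendsto (fun k : ℕ => e / (k:ℝ)) atTop (𝓝 0) :=
    fun e => tendsto_const_nhds.div_atTop tendsto_natCast_atTop_atTop
  have h1 : Tendsto (fun k : ℕ => (c / (k:ℝ) + 1) / (d / (k:ℝ) + 1)) atTop (𝓝 1) := by
    have := ((h0 c).add (tendsto_const_nhds (x := (1:ℝ)))).div
      ((h0 d).add (tendsto_const_nhds (x := (1:ℝ)))) (by norm_num)
    have h2 : ((0:ℝ)+1)/(0+1) = 1 := by norm_num
    rw [h2] at this
    exact this
  refine h1.congr' ?_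
  filter_upwards [eventually_gt_atTop 0] with k hk
  have hk' : (0:ℝ) < (k:ℝ) := by exact_mod_cast hk
  field_simp

lemma summable_aux (r : ℝ) (hr : 0 < r) (x : ℝ) (hx0 : 0 < x) (hx1 : x < 1) (s m : ℝ) (hm : 0 < m) :
    Summable (fun k : ℕ => Real.Gamma (r + (k:ℝ)) / (k.factorial : ℝ) * x ^ k / ((k:ℝ) + m) ^ s) := by
  set f : ℕ → ℝ := fun k => Real.Gamma (r + (k:ℝ)) / (k.factorial : ℝ) * x ^ k / ((k:ℝ) + m) ^ s
    with hf
  have hfpos : ∀ k, 0 < f k := by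
    intro k
    have h1 : 0 < Real.Gamma (r + (k:ℝ)) := Real.Gamma_pos_of_pos (by positivity)
    have h2 : (0:ℝ) < (k.factorial : ℝ) := by exact_mod_cast k.factorial_pos
    have h3 : (0:ℝ) < ((k:ℝ) + m) ^ s := Real.rpow_pos_of_pos (by positivity) s
    positivity
  apply summable_of_ratio_test_tendsto_lt_one hx1
    (Filter.Eventually.of_forall fun k => (hfpos k).ne')
  have key : ∀ k : ℕ, ‖f (k+1)‖ / ‖f k‖ =
      ((r + (k:ℝ)) / (1 + (k:ℝ))) * (((m + (k:ℝ)) / ((m+1) + (k:ℝ))) ^ s) * x := by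
    intro k
    have hGpos : 0 < Real.Gamma (r + (k:ℝ)) := Real.Gamma_pos_of_pos (by positivity)
    have hG : Real.Gamma (r + ((k+1 : ℕ):ℝ)) = (r + (k:ℝ)) * Real.Gamma (r + (k:ℝ)) := by
      push_cast
      rw [show r + ((k:ℝ) + 1) = (r + (k:ℝ)) + 1 by ring, Real.Gamma_add_one (by positivity)]
    rw [Real.norm_of_nonneg (hfpos _).le, Real.norm_of_nonneg (hfpos _).le]
    simp only [hf]
    rw [hG]
    have hfac : (((k+1).factorial : ℕ) : ℝ) = ((k:ℝ) + 1) * (k.factorial : ℝ) := by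
      push_cast [Nat.factorial_succ]; ring
    rw [hfac, pow_succ]
    have hratio : ((m + (k:ℝ)) / ((m+1) + (k:ℝ))) ^ s = ((k:ℝ) + m) ^ s / (((k:ℝ)+1) + m) ^ s := by
      rw [Real.div_rpow (by positivity) (by positivity)]
      ring_nf
    have hc : (((k+1 : ℕ)):ℝ) + m = ((k:ℝ)+1) + m := by push_cast; ring
    rw [hc, hratio]
    have hrpow : (((k:ℝ)+1) + m) ^ s ≠ 0 := (Real.rpow_pos_of_pos (by positivity) s).ne'
    have hrpow2 : ((k:ℝ) + m) ^ s ≠ 0 := (Real.rpow_pos_of_pos (by positivity) s).ne'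
    have hkf : ((k.factorial : ℕ) : ℝ) ≠ 0 := by exact_mod_cast k.factorial_pos.ne'
    have hx' : x ^ k ≠ 0 := (pow_pos hx0 k).ne'
    field_simp
    ring
  rw [show 𝓝 x = 𝓝 ((1 : ℝ) * ((1:ℝ)^s) * x) by rw [Real.one_rpow, one_mul, one_mul]]
  refine Tendsto.congr (fun k => (key k).symm) ?_
  exact ((tendsto_ratio_aux r 1).mul ((tendsto_ratio_aux m (m+1)).rpow_const
    (Or.inl one_ne_zero))).mul tendsto_const_nhds

lemma integrableOn_aux (p c : ℝ) (hp : 0 < p) (hc : 0 < c) :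
    IntegrableOn (fun x : ℝ => x ^ (p-1) * Real.exp (-(c*x))) (Ioi 0) := by
  have h := integrableOn_rpow_mul_exp_neg_mul_rpow (s := p-1) (p := 1) (b := c)
    (by linarith) zero_lt_one hc
  refine h.congr_fun (fun x hx => ?_) measurableSet_Ioi
  beta_reduce
  rw [Real.rpow_one, neg_mul]

lemma hasSum_binomial_s1 {r u : ℝ} (hr : 0 < r) (hu0 : 0 < u) (hu1 : u < 1) :
    HasSum (fun k : ℕ => Real.Gamma (r + (k:ℝ)) / (Real.Gamma r * (k.factorial:ℝ)) * (-u) ^ k)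
      ((1+u) ^ (-r)) := by
  have hGr : 0 < Real.Gamma r := Real.Gamma_pos_of_pos hr
  set F : ℕ → ℝ → ℝ :=
    fun k x => (x ^ (r-1) * Real.exp (-x)) * ((-(u*x)) ^ k / (k.factorial:ℝ)) with hF
  have hkf : ∀ k : ℕ, (0:ℝ) < (k.factorial:ℝ) := fun k => by exact_mod_cast k.factorial_pos
  have hpt : ∀ (k : ℕ) (x : ℝ), x ∈ Ioi (0:ℝ) →
      ((-u) ^ k / (k.factorial:ℝ)) * (x ^ (r + (k:ℝ) - 1) * Real.exp (-(1*x))) = F k x := by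
    intro k x hx
    have hx0 : (0:ℝ) < x := hx
    have h1 : x ^ (r + (k:ℝ) - 1) = x ^ (r-1) * x ^ k := by
      rw [← Real.rpow_natCast x k, ← Real.rpow_add hx0]; ring_nf
    have h2 : (-(u*x)) ^ k = (-u) ^ k * x ^ k := by
      rw [show -(u*x) = (-u) * x by ring, mul_pow]
    simp only [hF]
    rw [h1, h2, one_mul]
    ring
  have hint : ∀ k : ℕ, IntegrableOn (F k) (Ioi 0) := by
    intro k
    have h1 : IntegrableOn
        (fun x : ℝ => ((-u) ^ k / (k.factorial:ℝ)) * (x ^ (r + (k:ℝ) - 1) * Real.exp (-(1*x))))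
        (Ioi 0) :=
      (integrableOn_aux (r + k) 1 (by positivity) one_pos).const_mul ((-u) ^ k / (k.factorial:ℝ))
    exact h1.congr_fun (hpt k) measurableSet_Ioi
  have hval : ∀ k : ℕ, ∫ x in Ioi (0:ℝ), F k x
      = ((-u) ^ k / (k.factorial:ℝ)) * Real.Gamma (r + (k:ℝ)) := by
    intro k
    rw [← setIntegral_congr_fun measurableSet_Ioi (hpt k), integral_const_mul,
      Real.integral_rpow_mul_exp_neg_mul_Ioi (by positivity : (0:ℝ) < r + (k:ℝ)) one_pos]
    norm_num
  have hnorm : ∀ k : ℕ, ∫ x in Ioi (0:ℝ), ‖F k x‖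
      = Real.Gamma (r + (k:ℝ)) / (k.factorial:ℝ) * u ^ k := by
    intro k
    have hptn : ∀ x ∈ Ioi (0:ℝ),
        (u ^ k / (k.factorial:ℝ)) * (x ^ (r + (k:ℝ) - 1) * Real.exp (-(1*x))) = ‖F k x‖ := by
      intro x hx
      have hx0 : (0:ℝ) < x := hx
      have hab : |(-u) ^ k| = u ^ k := by rw [abs_pow, abs_neg, abs_of_pos hu0]
      rw [← hpt k x hx, Real.norm_eq_abs, abs_mul, abs_div, hab, abs_of_pos (hkf k),
        abs_of_pos (by positivity : (0:ℝ) < x ^ (r + (k:ℝ) - 1) * Real.exp (-(1*x)))]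
    rw [← setIntegral_congr_fun measurableSet_Ioi hptn, integral_const_mul,
      Real.integral_rpow_mul_exp_neg_mul_Ioi (by positivity : (0:ℝ) < r + (k:ℝ)) one_pos]
    norm_num
    ring
  have hsum : Summable (fun k : ℕ => ∫ x in Ioi (0:ℝ), ‖F k x‖) := by
    refine ((summable_aux r hr u hu0 hu1 0 1 one_pos).congr ?_)
    intro k
    rw [hnorm k, Real.rpow_zero, div_one]
  have hswap := MeasureTheory.integral_tsum_of_summable_integral_norm hint hsum
  have hptsum : ∀ x ∈ Ioi (0:ℝ), ∑' k, F k x = x ^ (r-1) * Real.exp (-((1+u)*x)) := by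
    intro x hx
    have h := NormedSpace.expSeries_div_hasSum_exp (𝔸 := ℝ) (-(u*x))
    rw [← Real.exp_eq_exp_ℝ] at h
    have h2 := h.mul_left (x ^ (r-1) * Real.exp (-x))
    rw [h2.tsum_eq, mul_assoc, ← Real.exp_add]
    ring_nf
  have hI : ∫ x in Ioi (0:ℝ), ∑' k, F k x = (1/(1+u)) ^ r * Real.Gamma r := by
    rw [setIntegral_congr_fun measurableSet_Ioi hptsum]
    exact Real.integral_rpow_mul_exp_neg_mul_Ioi hr (by linarith)
  have hS : Summable (fun k : ℕ =>
      Real.Gamma (r + (k:ℝ)) / (Real.Gamma r * (k.factorial:ℝ)) * (-u) ^ k) := by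
    apply Summable.of_abs
    refine (((summable_aux r hr u hu0 hu1 0 1 one_pos).mul_left (Real.Gamma r)⁻¹).congr ?_)
    intro k
    have hG : 0 < Real.Gamma (r + (k:ℝ)) := Real.Gamma_pos_of_pos (by positivity)
    rw [Real.rpow_zero, div_one, abs_mul, abs_pow, abs_neg, abs_of_pos hu0,
      abs_of_pos (by positivity : (0:ℝ) < Real.Gamma (r + (k:ℝ)) / (Real.Gamma r * (k.factorial:ℝ)))]
    field_simp
  refine (Summable.hasSum_iff hS).mpr ?_
  have e1 : ∀ k : ℕ, Real.Gamma (r + (k:ℝ)) / (Real.Gamma r * (k.factorial:ℝ)) * (-u) ^ k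
      = (Real.Gamma r)⁻¹ * ∫ x in Ioi (0:ℝ), F k x := by
    intro k
    rw [hval k]
    field_simp
  calc ∑' k : ℕ, Real.Gamma (r + (k:ℝ)) / (Real.Gamma r * (k.factorial:ℝ)) * (-u) ^ k
      = ∑' k : ℕ, (Real.Gamma r)⁻¹ * ∫ x in Ioi (0:ℝ), F k x := by exact tsum_congr e1
    _ = (Real.Gamma r)⁻¹ * ∑' k : ℕ, ∫ x in Ioi (0:ℝ), F k x := tsum_mul_left
    _ = (Real.Gamma r)⁻¹ * ((1/(1+u)) ^ r * Real.Gamma r) := by rw [hswap, hI]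
    _ = (1+u) ^ (-r) := by
        rw [one_div, Real.inv_rpow (by linarith), ← Real.rpow_neg (by linarith)]
        field_simp

/-- For `a, b, r, s > 0` and `t > 0`,
`∫_0^∞ y^(s-1) e^(-b(t+y))/(1+e^(-a(t+y)))^r dy
  = e^(-bt) a^(-s) Γ(s) ∑_{k≥0} (Γ(r+k)/(Γ(r) k!)) (-e^(-at))^k / (k + b/a)^s`,
the series converging absolutely. -/
theorem marginal_generator_eq_hurwitz_lerch
    (a b r s t : ℝ) (ha : 0 < a) (hb : 0 < b) (hr : 0 < r) (hs : 0 < s) (ht : 0 < t) :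
    Summable (fun k : ℕ =>
      |Real.Gamma (r + (k : ℝ)) / (Real.Gamma r * (k.factorial : ℝ)) *
        ((-Real.exp (-(a * t))) ^ k / ((k : ℝ) + b / a) ^ s)|) ∧
    ∫ y in Ioi (0 : ℝ),
        y ^ (s - 1) * (Real.exp (-(b * (t + y))) / (1 + Real.exp (-(a * (t + y)))) ^ r) =
      Real.exp (-(b * t)) * a ^ (-s) * Real.Gamma s *
        ∑' k : ℕ, Real.Gamma (r + (k : ℝ)) / (Real.Gamma r * (k.factorial : ℝ)) *
          ((-Real.exp (-(a * t))) ^ k / ((k : ℝ) + b / a) ^ s) := by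
  have hGr : 0 < Real.Gamma r := Real.Gamma_pos_of_pos hr
  set x : ℝ := Real.exp (-(a * t)) with hxdef
  have hx0 : 0 < x := Real.exp_pos _
  have hx1 : x < 1 := by
    rw [hxdef, Real.exp_lt_one_iff]
    nlinarith
  set m : ℝ := b / a with hmdef
  have hm : 0 < m := div_pos hb ha
  set d : ℕ → ℝ := fun k => Real.Gamma (r + (k:ℝ)) / (Real.Gamma r * (k.factorial:ℝ)) with hd
  have hdpos : ∀ k, 0 < d k := by
    intro k
    have h1 : 0 < Real.Gamma (r + (k:ℝ)) := Real.Gamma_pos_of_pos (by positivity)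
    have h2 : (0:ℝ) < (k.factorial:ℝ) := by exact_mod_cast k.factorial_pos
    simp only [hd]
    positivity
  set c : ℕ → ℝ := fun k => b + a * k with hc
  have hck : ∀ k, 0 < c k := fun k => by
    have hk : (0:ℝ) ≤ (k:ℝ) := Nat.cast_nonneg k
    simp only [hc]; positivity
  set G : ℕ → ℝ → ℝ := fun k y =>
    (d k * ((-1:ℝ) ^ k * Real.exp (-(c k * t)))) * (y ^ (s-1) * Real.exp (-(c k * y))) with hG
  have hkm : ∀ k : ℕ, (0:ℝ) < (k:ℝ) + m := fun k => by positivity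
  have hexpsplit : ∀ k : ℕ, Real.exp (-(c k * t)) = Real.exp (-(b*t)) * x ^ k := by
    intro k
    rw [hxdef, ← Real.exp_nat_mul, ← Real.exp_add]
    congr 1
    simp only [hc]
    ring
  have hpow : ∀ k : ℕ, (1/(c k)) ^ s = a ^ (-s) * ((k:ℝ) + m) ^ (-s) := by
    intro k
    have hck2 : c k = a * ((k:ℝ) + m) := by
      simp only [hc, hmdef]
      field_simp
      ring
    rw [hck2, one_div, Real.inv_rpow (by positivity), ← Real.rpow_neg (by positivity),
      Real.mul_rpow ha.le (hkm k).le]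
  -- summability of the absolute series (first conjunct)
  have habs : Summable (fun k : ℕ => |d k * ((-x) ^ k / ((k:ℝ) + m) ^ s)|) := by
    refine ((summable_aux r hr x hx0 hx1 s m hm).mul_left (Real.Gamma r)⁻¹).congr ?_
    intro k
    have hrp : (0:ℝ) < ((k:ℝ) + m) ^ s := Real.rpow_pos_of_pos (hkm k) s
    have hax : |(-x) ^ k| = x ^ k := by
      rw [abs_pow, abs_neg, abs_of_pos hx0]
    rw [abs_mul, abs_of_pos (hdpos k), abs_div, hax, abs_of_pos hrp]
    simp only [hd]
    field_simp
  -- pointwise expansion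
  have hpt : ∀ y ∈ Ioi (0:ℝ), HasSum (fun k => G k y)
      (y ^ (s-1) * (Real.exp (-(b*(t+y))) / (1 + Real.exp (-(a*(t+y)))) ^ r)) := by
    intro y hy
    have hy0 : (0:ℝ) < y := hy
    have hty : 0 < t + y := by linarith
    set u : ℝ := Real.exp (-(a*(t+y))) with hu
    have hu0 : 0 < u := Real.exp_pos _
    have hu1 : u < 1 := by
      rw [hu, Real.exp_lt_one_iff]
      nlinarith
    have h := (hasSum_binomial_s1 hr hu0 hu1).mul_left (y ^ (s-1) * Real.exp (-(b*(t+y))))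
    have hfun : ∀ k : ℕ, (y ^ (s-1) * Real.exp (-(b*(t+y)))) *
        (Real.Gamma (r + (k:ℝ)) / (Real.Gamma r * (k.factorial:ℝ)) * (-u) ^ k) = G k y := by
      intro k
      simp only [hG, hd]
      have h1 : (-u) ^ k = (-1:ℝ) ^ k * u ^ k := by
        rw [← neg_one_mul, mul_pow]
      have h2 : Real.exp (-(b*(t+y))) * u ^ k
          = Real.exp (-(c k * t)) * Real.exp (-(c k * y)) := by
        rw [hu, ← Real.exp_nat_mul, ← Real.exp_add, ← Real.exp_add]
        congr 1
        simp only [hc]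
        ring
      rw [h1]
      calc (y ^ (s-1) * Real.exp (-(b*(t+y)))) *
            (Real.Gamma (r + (k:ℝ)) / (Real.Gamma r * (k.factorial:ℝ)) * ((-1:ℝ) ^ k * u ^ k))
          = Real.Gamma (r + (k:ℝ)) / (Real.Gamma r * (k.factorial:ℝ)) * ((-1:ℝ) ^ k *
              (Real.exp (-(b*(t+y))) * u ^ k)) * y ^ (s-1) := by ring
        _ = _ := by rw [h2]; ring
    have hvalv : (y ^ (s-1) * Real.exp (-(b*(t+y)))) * (1+u) ^ (-r)
        = y ^ (s-1) * (Real.exp (-(b*(t+y))) / (1 + u) ^ r) := by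
      rw [Real.rpow_neg (by positivity)]
      ring
    rw [← hvalv]
    exact (funext hfun : _) ▸ h
  -- integrability and values
  have hint : ∀ k : ℕ, IntegrableOn (G k) (Ioi 0) := by
    intro k
    exact (integrableOn_aux s (c k) hs (hck k)).const_mul _
  have hval : ∀ k : ℕ, ∫ y in Ioi (0:ℝ), G k y
      = (d k * ((-1:ℝ) ^ k * Real.exp (-(c k * t)))) * ((1/(c k)) ^ s * Real.Gamma s) := by
    intro k
    simp only [hG]
    rw [MeasureTheory.integral_const_mul,
      Real.integral_rpow_mul_exp_neg_mul_Ioi hs (hck k)]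
  have hnorm : ∀ k : ℕ, ∫ y in Ioi (0:ℝ), ‖G k y‖
      = (d k * Real.exp (-(c k * t))) * ((1/(c k)) ^ s * Real.Gamma s) := by
    intro k
    have hptn : ∀ y ∈ Ioi (0:ℝ),
        (d k * Real.exp (-(c k * t))) * (y ^ (s-1) * Real.exp (-(c k * y))) = ‖G k y‖ := by
      intro y hy
      have hy0 : (0:ℝ) < y := hy
      simp only [hG]
      simp only [Real.norm_eq_abs, abs_mul, abs_pow, abs_neg, abs_one, one_pow]
      rw [abs_of_pos (hdpos k), abs_of_pos (Real.exp_pos _),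
        abs_of_pos (Real.rpow_pos_of_pos hy0 _), abs_of_pos (Real.exp_pos _)]
      ring
    rw [← setIntegral_congr_fun measurableSet_Ioi hptn, MeasureTheory.integral_const_mul,
      Real.integral_rpow_mul_exp_neg_mul_Ioi hs (hck k)]
  have hsumnorm : Summable (fun k : ℕ => ∫ y in Ioi (0:ℝ), ‖G k y‖) := by
    refine ((summable_aux r hr x hx0 hx1 s m hm).mul_left
      ((Real.Gamma r)⁻¹ * (Real.exp (-(b*t)) * (a ^ (-s) * Real.Gamma s)))).congr ?_
    intro k
    have hkf : (0:ℝ) < (k.factorial:ℝ) := by exact_mod_cast k.factorial_pos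
    have hrp : (0:ℝ) < ((k:ℝ) + m) ^ s := Real.rpow_pos_of_pos (hkm k) s
    rw [hnorm k, hexpsplit k, hpow k, Real.rpow_neg (hkm k).le]
    simp only [hd]
    field_simp
  have hswap := MeasureTheory.integral_tsum_of_summable_integral_norm hint hsumnorm
  refine ⟨habs, ?_⟩
  have hpt2 : ∀ y ∈ Ioi (0:ℝ), (fun y => ∑' k, G k y) y
      = y ^ (s-1) * (Real.exp (-(b*(t+y))) / (1 + Real.exp (-(a*(t+y)))) ^ r) :=
    fun y hy => (hpt y hy).tsum_eq
  have e1 : ∀ k : ℕ, ∫ y in Ioi (0:ℝ), G k y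
      = Real.exp (-(b*t)) * a ^ (-s) * Real.Gamma s * (d k * ((-x) ^ k / ((k:ℝ) + m) ^ s)) := by
    intro k
    rw [hval k, hexpsplit k, hpow k, Real.rpow_neg (hkm k).le]
    have h1 : (-x) ^ k = (-1:ℝ) ^ k * x ^ k := by rw [← neg_one_mul, mul_pow]
    rw [h1]
    ring
  calc ∫ y in Ioi (0:ℝ),
        y ^ (s-1) * (Real.exp (-(b*(t+y))) / (1 + Real.exp (-(a*(t+y)))) ^ r)
      = ∫ y in Ioi (0:ℝ), ∑' k, G k y :=
        (setIntegral_congr_fun measurableSet_Ioi hpt2).symm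
    _ = ∑' k, ∫ y in Ioi (0:ℝ), G k y := hswap.symm
    _ = ∑' k : ℕ, Real.exp (-(b*t)) * a ^ (-s) * Real.Gamma s *
          (d k * ((-x) ^ k / ((k:ℝ) + m) ^ s)) := tsum_congr e1
    _ = Real.exp (-(b*t)) * a ^ (-s) * Real.Gamma s *
          ∑' k : ℕ, d k * ((-x) ^ k / ((k:ℝ) + m) ^ s) := tsum_mul_left
end

section
/- Let n ≥ 3 be an integer with n ≠ 4. Then \(\int_0^{\infty} x^{n/2-1}\,\frac{e^{-x}}{(1+e^{-x})^{2}}\,dx = \Gamma(n/2)\,(1-2^{2-n/2})\,\zeta(n/2-1)\), where ζ is the analytically continued Riemann zeta function; consequently the normalizing constant \(c_n=\frac{\Gamma(n/2)}{(2\pi)^{n/2}}\left[\int_0^{\infty}x^{n/2-1}\frac{e^{-x}}{(1+e^{-x})^2}dx\right]^{-1}\) equals \(\pi^{-n/2}\left[(2^{n/2}-4)\,\zeta(n/2-1)\right]^{-1}\). -/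
open Real MeasureTheory Set

noncomputable def Ffd : ℝ → ℂ := fun t => ((Real.exp t + 1)⁻¹ : ℝ)

lemma hasSum_Ffd {t : ℝ} (ht : 0 < t) :
    HasSum (fun k : ℕ => (-1) ^ k * ((Real.exp (-((k : ℝ) + 1) * t) : ℝ) : ℂ)) (Ffd t) := by
  have hr : ‖(-(Real.exp (-t)) : ℂ)‖ < 1 := by
    rw [norm_neg]
    simp only [Complex.norm_real, Real.norm_eq_abs, abs_of_pos (Real.exp_pos _)]
    exact Real.exp_lt_one_iff.mpr (neg_lt_zero.mpr ht)
  have h := (hasSum_geometric_of_norm_lt_one hr).mul_left ((Real.exp (-t) : ℝ) : ℂ)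
  have heq : ∀ k : ℕ, ((Real.exp (-t) : ℝ) : ℂ) * (-(Real.exp (-t) : ℂ)) ^ k
      = (-1) ^ k * ((Real.exp (-((k : ℝ) + 1) * t) : ℝ) : ℂ) := by
    intro k
    rw [neg_pow]
    push_cast
    rw [← Complex.exp_nat_mul, mul_comm ((-1:ℂ)^k), ← mul_assoc, ← Complex.exp_add,
      show (-↑t + ↑k * -↑t : ℂ) = -(↑k + 1) * ↑t by ring]
    ring
  rw [funext heq] at h
  rw [show Ffd t = ((Real.exp (-t) : ℝ) : ℂ) * (1 - -(Real.exp (-t) : ℂ))⁻¹ from ?_]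
  · exact h
  have h1 : (1 : ℂ) - -(Real.exp (-t) : ℂ) = ((1 + Real.exp (-t) : ℝ) : ℂ) := by push_cast; ring
  rw [h1]
  have h2 : Ffd t = ((Real.exp (-t) * (1 + Real.exp (-t))⁻¹ : ℝ) : ℂ) := by
    unfold Ffd
    norm_cast
    rw [Real.exp_neg]
    field_simp
  rw [h2]
  push_cast
  ring

lemma summable_shift {z : ℂ} (hz : 1 < z.re) :
    Summable (fun k : ℕ => 1 / ((k : ℂ) + 1) ^ z) := by
  have h := (Complex.summable_one_div_nat_cpow (p := z)).mpr hz
  have := h.comp_injective (fun a b h => by simpa using h : Function.Injective (fun n : ℕ => n + 1))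
  refine this.congr fun k => ?_
  simp [Function.comp]

lemma hasSum_zeta_shift {z : ℂ} (hz : 1 < z.re) :
    HasSum (fun k : ℕ => 1 / ((k : ℂ) + 1) ^ z) (riemannZeta z) := by
  have h := (summable_shift hz).hasSum
  rwa [← zeta_eq_tsum_one_div_nat_add_one_cpow hz] at h

lemma eta_hasSum {z : ℂ} (hz : 1 < z.re) :
    HasSum (fun k : ℕ => (-1) ^ k / ((k : ℂ) + 1) ^ z)
      ((1 - 2 ^ ((1 : ℂ) - z)) * riemannZeta z) := by
  have h1 := hasSum_zeta_shift hz
  -- sum over odd indices of 2/(k+1)^z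
  set g' : ℕ → ℂ := fun k => if Odd k then 2 / ((k : ℂ) + 1) ^ z else 0 with hg'
  have hinj : Function.Injective (fun m : ℕ => 2 * m + 1) := by
    intro a b h
    simp only [] at h
    omega
  have hodd : HasSum g' ((2 : ℂ) ^ ((1 : ℂ) - z) * riemannZeta z) := by
    rw [← Function.Injective.hasSum_iff hinj (fun k hk => ?_)]
    · have hcomp : (g' ∘ fun m : ℕ => 2 * m + 1)
          = fun m : ℕ => (2 : ℂ) ^ ((1:ℂ) - z) * (1 / ((m : ℂ) + 1) ^ z) := by
        funext m
        simp only [Function.comp, hg', if_pos (odd_two_mul_add_one m)]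
        have hcast : ((2 * m + 1 : ℕ) : ℂ) + 1 = (((2 : ℝ) : ℂ)) * ((((m : ℝ) + 1 : ℝ)) : ℂ) := by
          push_cast; ring
        rw [hcast, Complex.mul_cpow_ofReal_nonneg (by norm_num) (by positivity)]
        rw [Complex.cpow_sub _ _ (by norm_num : (2:ℂ) ≠ 0), Complex.cpow_one]
        push_cast
        field_simp
      rw [hcomp]
      exact h1.mul_left _
    · simp only [hg', mem_range, not_exists] at hk ⊢
      rw [if_neg]
      intro ⟨m, hm⟩
      exact hk m (by omega)
  have h2 := h1.sub hodd
  have heq : ∀ k : ℕ, 1 / ((k : ℂ) + 1) ^ z - g' k = (-1) ^ k / ((k : ℂ) + 1) ^ z := by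
    intro k
    rcases Nat.even_or_odd k with he | ho
    · rw [hg']
      simp only []
      rw [if_neg (Nat.not_odd_iff_even.mpr he), he.neg_one_pow]
      ring
    · rw [hg']
      simp only []
      rw [if_pos ho, ho.neg_one_pow]
      ring
  rw [funext heq] at h2
  rw [show (1 - 2 ^ ((1 : ℂ) - z)) * riemannZeta z = riemannZeta z - 2 ^ ((1 : ℂ) - z) * riemannZeta z by ring]
  exact h2

lemma mellin_Ffd_of_one_lt {z : ℂ} (hz : 1 < z.re) :
    mellin Ffd z = Complex.Gamma z * ((1 - 2 ^ ((1 : ℂ) - z)) * riemannZeta z) := by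
  have hp : ∀ k : ℕ, ((-1 : ℂ) ^ k = 0) ∨ (0 : ℝ) < (k : ℝ) + 1 := fun k => Or.inr (by positivity)
  have hs : 0 < z.re := lt_trans one_pos hz
  have hF : ∀ t ∈ Ioi (0:ℝ), HasSum (fun k : ℕ =>
      (-1 : ℂ) ^ k * ((Real.exp (-((k : ℝ) + 1) * t) : ℝ) : ℂ)) (Ffd t) :=
    fun t ht => hasSum_Ffd ht
  have h_sum : Summable (fun k : ℕ => ‖(-1 : ℂ) ^ k‖ / ((k : ℝ) + 1) ^ z.re) := by
    have h := (Real.summable_one_div_nat_rpow (p := z.re)).mpr hz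
    have h2 := h.comp_injective
      (fun a b h => by simpa using h : Function.Injective (fun n : ℕ => n + 1))
    refine h2.congr fun k => ?_
    simp [Function.comp]
  have key := hasSum_mellin hp hs hF h_sum
  rw [← key.tsum_eq]
  have : ∀ k : ℕ, Complex.Gamma z * (-1 : ℂ) ^ k / (((k : ℝ) + 1 : ℝ) : ℂ) ^ z
      = Complex.Gamma z * ((-1 : ℂ) ^ k / ((k : ℂ) + 1) ^ z) := by
    intro k
    push_cast
    ring
  rw [funext this, tsum_mul_left, (eta_hasSum hz).tsum_eq]

lemma preconn_U : IsPreconnected {z : ℂ | 1/4 < z.re ∧ z ≠ 1} := by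
  set A : Set ℂ := {z | 1/4 < z.re} ∩ {z | z.re < 1} with hA
  set B : Set ℂ := {z | 1 < z.re} with hB
  set C : Set ℂ := {z | 1/4 < z.re} ∩ {z | 0 < z.im} with hC
  set D : Set ℂ := {z | 1/4 < z.re} ∩ {z | z.im < 0} with hD
  have pA : IsPreconnected A :=
    ((convex_halfSpace_re_gt _).inter (convex_halfSpace_re_lt _)).isPreconnected
  have pB : IsPreconnected B := (convex_halfSpace_re_gt _).isPreconnected
  have pC : IsPreconnected C :=
    ((convex_halfSpace_re_gt _).inter (convex_halfSpace_im_gt _)).isPreconnected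
  have pD : IsPreconnected D :=
    ((convex_halfSpace_re_gt _).inter (convex_halfSpace_im_lt _)).isPreconnected
  have p1 : IsPreconnected (A ∪ C) := by
    apply IsPreconnected.union (Complex.mk (1/2) (1/2)) _ _ pA pC
    · constructor <;> simp [hA] <;> norm_num
    · constructor <;> simp [hC] <;> norm_num
  have p2 : IsPreconnected ((A ∪ C) ∪ B) := by
    apply IsPreconnected.union (Complex.mk 2 1) _ _ p1 pB
    · refine Or.inr ⟨?_, ?_⟩ <;> simp [hC] <;> norm_num
    · simp [hB]
  have p3 : IsPreconnected (((A ∪ C) ∪ B) ∪ D) := by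
    apply IsPreconnected.union (Complex.mk (1/2) (-1/2)) _ _ p2 pD
    · refine Or.inl (Or.inl ⟨?_, ?_⟩) <;> simp [hA] <;> norm_num
    · constructor <;> simp [hD] <;> norm_num
  have hUeq : {z : ℂ | 1/4 < z.re ∧ z ≠ 1} = ((A ∪ C) ∪ B) ∪ D := by
    ext z
    simp only [mem_setOf_eq, mem_union, mem_inter_iff, hA, hB, hC, hD, mem_setOf_eq]
    constructor
    · rintro ⟨hre, hne⟩
      rcases lt_trichotomy z.re 1 with h | h | h
      · exact Or.inl (Or.inl (Or.inl ⟨hre, h⟩))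
      · rcases lt_trichotomy z.im 0 with hi | hi | hi
        · exact Or.inr ⟨hre, hi⟩
        · exact absurd (Complex.ext h (by simpa [Complex.one_im] using hi)) hne
        · exact Or.inl (Or.inl (Or.inr ⟨hre, hi⟩))
      · exact Or.inl (Or.inr h)
    · rintro (((⟨h1, h2⟩ | ⟨h1, h2⟩) | h) | ⟨h1, h2⟩)
      · exact ⟨h1, fun he => by rw [he] at h2; simp at h2⟩
      · exact ⟨h1, fun he => by rw [he] at h2; simp at h2⟩
      · refine ⟨by linarith [h], fun he => by rw [he] at h; simp at h⟩
      · exact ⟨h1, fun he => by rw [he] at h2; simp at h2⟩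
  rw [hUeq]
  exact p3

lemma mellin_Ffd_eq {z : ℂ} (hz : 1/4 < z.re) (hz1 : z ≠ 1) :
    mellin Ffd z = Complex.Gamma z * ((1 - 2 ^ ((1 : ℂ) - z)) * riemannZeta z) := by
  set U : Set ℂ := {w : ℂ | 1/4 < w.re ∧ w ≠ 1} with hU
  have hUo : IsOpen U := by
    rw [hU, setOf_and]
    exact (isOpen_Ioi.preimage Complex.continuous_re).inter isOpen_ne
  -- Mellin transform analytic on U
  have hFc : LocallyIntegrableOn Ffd (Ioi 0) := by
    apply ContinuousOn.locallyIntegrableOn _ measurableSet_Ioi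
    have hc : Continuous (fun t : ℝ => (Real.exp t + 1)⁻¹) :=
      (Real.continuous_exp.add continuous_const).inv₀ (fun t => (by positivity : Real.exp t + 1 ≠ 0))
    exact (Complex.continuous_ofReal.comp hc).continuousOn
  have hFtop : Ffd =O[Filter.atTop] fun t => Real.exp (-1 * t) := by
    apply Asymptotics.IsBigO.of_bound 1
    filter_upwards with t
    simp only [Ffd, Complex.norm_real, Real.norm_eq_abs, one_mul]
    rw [abs_of_pos (by positivity), abs_of_pos (Real.exp_pos _), neg_one_mul, Real.exp_neg]
    apply inv_anti₀ (Real.exp_pos t)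
    linarith
  have hFbot : Ffd =O[nhdsWithin 0 (Ioi 0)] fun t => t ^ (-(1/4) : ℝ) := by
    apply Asymptotics.IsBigO.of_bound 1
    filter_upwards [Ioo_mem_nhdsGT_of_mem (by norm_num : (0:ℝ) ∈ Ico 0 1)] with t ht
    simp only [Ffd, Complex.norm_real, Real.norm_eq_abs, one_mul]
    rw [abs_of_pos (by positivity), abs_of_pos (Real.rpow_pos_of_pos ht.1 _)]
    have h1 : (Real.exp t + 1)⁻¹ ≤ 1 := by
      rw [inv_le_one_iff₀]
      right
      have := Real.exp_pos t
      linarith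
    have h2 : (1:ℝ) ≤ t ^ (-(1/4) : ℝ) := by
      calc (1:ℝ) = t ^ (0:ℝ) := (Real.rpow_zero t).symm
      _ ≤ t ^ (-(1/4) : ℝ) :=
        Real.rpow_le_rpow_of_exponent_ge ht.1 ht.2.le (by norm_num)
    linarith
  have hmel : AnalyticOnNhd ℂ (mellin Ffd) U := by
    apply DifferentiableOn.analyticOnNhd _ hUo
    intro w hw
    exact (mellin_differentiableAt_of_isBigO_rpow_exp one_pos hFc hFtop hFbot
      hw.1).differentiableWithinAt
  have hrhs : AnalyticOnNhd ℂ
      (fun w => Complex.Gamma w * ((1 - 2 ^ ((1 : ℂ) - w)) * riemannZeta w)) U := by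
    apply DifferentiableOn.analyticOnNhd _ hUo
    intro w hw
    apply DifferentiableAt.differentiableWithinAt
    have hg : DifferentiableAt ℂ Complex.Gamma w := by
      apply Complex.differentiableAt_Gamma
      intro m hm
      have : w.re = -(m:ℝ) := by rw [hm]; simp
      have : (1:ℝ)/4 < -(m:ℝ) := this ▸ hw.1
      have : (0:ℝ) ≤ (m:ℝ) := Nat.cast_nonneg m
      linarith
    refine hg.mul (DifferentiableAt.mul ?_ (differentiableAt_riemannZeta hw.2))
    apply DifferentiableAt.sub (differentiableAt_const _)
    exact DifferentiableAt.const_cpow (differentiableAt_const _ |>.sub differentiableAt_id)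
      (Or.inl (by norm_num))
  have hUp : IsPreconnected U := preconn_U
  have h2U : (2 : ℂ) ∈ U := by
    constructor
    · simp; norm_num
    · norm_num
  have hev : mellin Ffd =ᶠ[nhds 2]
      (fun w => Complex.Gamma w * ((1 - 2 ^ ((1 : ℂ) - w)) * riemannZeta w)) := by
    have hV : {w : ℂ | 1 < w.re} ∈ nhds (2:ℂ) := by
      apply (isOpen_Ioi.preimage Complex.continuous_re).mem_nhds
      simp
    filter_upwards [hV] with w hw
    exact mellin_Ffd_of_one_lt hw
  exact hmel.eqOn_of_preconnected_of_eventuallyEq hrhs hUp h2U hev ⟨hz, hz1⟩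

lemma density_eq (x : ℝ) :
    Real.exp (-x) / (1 + Real.exp (-x)) ^ 2 = Real.exp x / (Real.exp x + 1) ^ 2 := by
  rw [Real.exp_neg]
  have h := (Real.exp_pos x).ne'
  field_simp

lemma int_fd {c : ℝ} (hc : 0 < c) :
    IntegrableOn (fun x : ℝ => x ^ (c - 1) * (Real.exp x + 1)⁻¹) (Ioi 0) := by
  apply Integrable.mono' (Real.GammaIntegral_convergent hc)
  · apply ContinuousOn.aestronglyMeasurable _ measurableSet_Ioi
    apply ContinuousOn.mul
    · exact fun x hx => (Real.continuousAt_rpow_const x _ (Or.inl (ne_of_gt hx))).continuousWithinAt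
    · exact ((Real.continuous_exp.add continuous_const).inv₀
        (fun t => (by positivity : Real.exp t + 1 ≠ 0))).continuousOn
  · filter_upwards [ae_restrict_mem measurableSet_Ioi] with x hx
    rw [Real.norm_eq_abs, abs_of_nonneg (mul_nonneg (Real.rpow_nonneg (le_of_lt hx) _)
      (by positivity)), mul_comm (Real.exp (-x))]
    apply mul_le_mul_of_nonneg_left _ (Real.rpow_nonneg (le_of_lt hx) _)
    rw [Real.exp_neg]
    exact inv_anti₀ (Real.exp_pos x) (by linarith)

lemma int_fd2 {c : ℝ} (hc : 0 < c) :
    IntegrableOn (fun x : ℝ => x ^ (c - 1) * (Real.exp x / (Real.exp x + 1) ^ 2)) (Ioi 0) := by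
  apply Integrable.mono' (Real.GammaIntegral_convergent hc)
  · apply ContinuousOn.aestronglyMeasurable _ measurableSet_Ioi
    apply ContinuousOn.mul
    · exact fun x hx => (Real.continuousAt_rpow_const x _ (Or.inl (ne_of_gt hx))).continuousWithinAt
    · apply ContinuousOn.div Real.continuous_exp.continuousOn
        (((Real.continuous_exp.add continuous_const).pow 2).continuousOn)
      intro x _
      exact (by positivity : (Real.exp x + 1) ^ 2 ≠ 0)
  · filter_upwards [ae_restrict_mem measurableSet_Ioi] with x hx
    rw [Real.norm_eq_abs, abs_of_nonneg (mul_nonneg (Real.rpow_nonneg (le_of_lt hx) _)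
      (by positivity)), mul_comm (Real.exp (-x))]
    apply mul_le_mul_of_nonneg_left _ (Real.rpow_nonneg (le_of_lt hx) _)
    rw [Real.exp_neg, inv_eq_one_div, div_le_div_iff₀ (by positivity) (Real.exp_pos x)]
    nlinarith [Real.exp_pos x]

lemma parts_eq {c : ℝ} (hc : 1 < c) :
    ∫ x in Ioi (0:ℝ), x ^ (c - 1) * (Real.exp x / (Real.exp x + 1) ^ 2)
      = (c - 1) * ∫ x in Ioi (0:ℝ), x ^ (c - 1 - 1) * (Real.exp x + 1)⁻¹ := by
  set G : ℝ → ℝ := fun x => -(Real.exp x + 1)⁻¹ with hG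
  set f : ℝ → ℝ := fun x => x ^ (c - 1) * G x with hf
  set f' : ℝ → ℝ := fun x => (c - 1) * x ^ (c - 1 - 1) * G x
      + x ^ (c - 1) * (Real.exp x / (Real.exp x + 1) ^ 2) with hf'
  have hderiv : ∀ x ∈ Ioi (0:ℝ), HasDerivAt f (f' x) x := by
    intro x hx
    have h1 : HasDerivAt (fun y : ℝ => y ^ (c - 1)) ((c - 1) * x ^ (c - 1 - 1)) x :=
      Real.hasDerivAt_rpow_const (Or.inl (ne_of_gt hx))
    have h2 : HasDerivAt G (Real.exp x / (Real.exp x + 1) ^ 2) x := by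
      have he : HasDerivAt (fun y : ℝ => Real.exp y + 1) (Real.exp x) x :=
        (Real.hasDerivAt_exp x).add_const 1
      have hi := he.inv (by positivity)
      have := hi.neg
      rw [show Real.exp x / (Real.exp x + 1) ^ 2 = -(-Real.exp x / (Real.exp x + 1) ^ 2) by ring]
      exact this
    exact h1.mul h2
  have hcont : ContinuousWithinAt f (Ici 0) 0 := by
    apply ContinuousWithinAt.mul
    · exact (Real.continuousAt_rpow_const 0 (c - 1) (Or.inr (by linarith))).continuousWithinAt
    · exact (((Real.continuous_exp.add continuous_const).inv₀
        (fun t => (by positivity : Real.exp t + 1 ≠ 0))).neg).continuousAt.continuousWithinAt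
  have htend : Filter.Tendsto f Filter.atTop (nhds 0) := by
    apply squeeze_zero_norm' _ (tendsto_rpow_mul_exp_neg_mul_atTop_nhds_zero (c-1) 1 one_pos)
    filter_upwards [Filter.eventually_ge_atTop (1:ℝ)] with x hx
    have hx0 : (0:ℝ) < x := by linarith
    rw [hf, Real.norm_eq_abs, abs_mul, abs_of_nonneg (Real.rpow_nonneg hx0.le _), hG]
    simp only [abs_neg, abs_inv]
    rw [abs_of_pos (by positivity : (0:ℝ) < Real.exp x + 1)]
    apply mul_le_mul_of_nonneg_left _ (Real.rpow_nonneg hx0.le _)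
    rw [neg_one_mul, Real.exp_neg]
    exact inv_anti₀ (Real.exp_pos x) (by linarith)
  have hint1 : IntegrableOn (fun x : ℝ => (c - 1) * x ^ (c - 1 - 1) * G x) (Ioi 0) := by
    have h := ((int_fd (by linarith : (0:ℝ) < c - 1)).neg).const_mul (c - 1)
    refine IntegrableOn.congr_fun h (fun x _ => ?_) measurableSet_Ioi
    simp only [hG, Pi.neg_apply]
    ring
  have hint2 : IntegrableOn
      (fun x : ℝ => x ^ (c - 1) * (Real.exp x / (Real.exp x + 1) ^ 2)) (Ioi 0) :=
    int_fd2 (by linarith : (0:ℝ) < c)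
  have f'int : IntegrableOn f' (Ioi 0) := by
    exact (hint1.add hint2).congr (Filter.Eventually.of_forall fun x => rfl)
  have key := integral_Ioi_of_hasDerivAt_of_tendsto hcont hderiv f'int htend
  have hf0 : f 0 = 0 := by
    rw [hf]
    simp only []
    rw [Real.zero_rpow (by linarith : c - 1 ≠ 0), zero_mul]
  rw [hf0, sub_zero] at key
  have hsplit : ∫ x in Ioi (0:ℝ), f' x
      = (∫ x in Ioi (0:ℝ), (c - 1) * x ^ (c - 1 - 1) * G x)
        + ∫ x in Ioi (0:ℝ), x ^ (c - 1) * (Real.exp x / (Real.exp x + 1) ^ 2) :=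
    integral_add hint1 hint2
  rw [key] at hsplit
  have h1 : ∫ x in Ioi (0:ℝ), (c - 1) * x ^ (c - 1 - 1) * G x
      = -((c - 1) * ∫ x in Ioi (0:ℝ), x ^ (c - 1 - 1) * (Real.exp x + 1)⁻¹) := by
    rw [← MeasureTheory.integral_const_mul, ← integral_neg]
    refine setIntegral_congr_fun measurableSet_Ioi (fun x _ => ?_)
    simp only [hG]
    ring
  rw [h1] at hsplit
  linarith [hsplit]

/-- For an integer `n ≥ 3`, `n ≠ 4`,
`∫_0^∞ x^(n/2-1) e^(-x)/(1+e^(-x))^2 dx = Γ(n/2) (1 - 2^(2-n/2)) ζ(n/2-1)`, where `ζ` is the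
analytically continued Riemann zeta function; consequently
`c_n = Γ(n/2)/(2π)^(n/2) (∫ ...)⁻¹` equals `π^(-n/2) ((2^(n/2)-4) ζ(n/2-1))⁻¹`. -/
theorem normalizing_constant_general_dim (n : ℕ) (hn : 3 ≤ n) (hn4 : n ≠ 4) :
    ((∫ x in Ioi (0 : ℝ),
        x ^ ((n : ℝ) / 2 - 1) * (Real.exp (-x) / (1 + Real.exp (-x)) ^ 2) : ℝ) : ℂ) =
      (Real.Gamma ((n : ℝ) / 2) : ℂ) * (1 - ((2 : ℝ) ^ (2 - (n : ℝ) / 2) : ℝ)) *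
        riemannZeta ((n : ℂ) / 2 - 1) ∧
    ((Real.Gamma ((n : ℝ) / 2) / (2 * π) ^ ((n : ℝ) / 2) : ℝ) : ℂ) *
        (((∫ x in Ioi (0 : ℝ),
            x ^ ((n : ℝ) / 2 - 1) * (Real.exp (-x) / (1 + Real.exp (-x)) ^ 2) : ℝ) : ℂ))⁻¹ =
      ((π ^ (-((n : ℝ) / 2)) : ℝ) : ℂ) *
        ((((2 : ℝ) ^ ((n : ℝ) / 2) - 4 : ℝ) : ℂ) * riemannZeta ((n : ℂ) / 2 - 1))⁻¹ := by
  have h3 : (3 : ℝ) ≤ (n : ℝ) := by exact_mod_cast hn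
  set s₀ : ℝ := (n : ℝ) / 2 with hs₀
  have hs1 : 1 < s₀ := by rw [hs₀]; linarith
  have hshalf : (3:ℝ)/2 ≤ s₀ := by rw [hs₀]; linarith
  have hs2 : s₀ ≠ 2 := by
    rw [hs₀]
    intro h
    apply hn4
    have : (n : ℝ) = 4 := by linarith
    exact_mod_cast this
  set w : ℂ := ((s₀ - 1 : ℝ) : ℂ) with hw
  have hwne : w ≠ 0 := by
    rw [hw]
    simp only [ne_eq, Complex.ofReal_eq_zero]
    linarith
  have hwne1 : w ≠ 1 := by
    rw [hw]
    intro h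
    rw [show (1:ℂ) = ((1:ℝ):ℂ) by norm_num] at h
    have := Complex.ofReal_injective h
    apply hs2
    linarith
  have hwre : (1:ℝ)/4 < w.re := by
    rw [hw, Complex.ofReal_re]
    linarith
  -- step 1: rewrite integrand
  have hIeq : (∫ x in Ioi (0:ℝ), x ^ (s₀ - 1) * (Real.exp (-x) / (1 + Real.exp (-x)) ^ 2))
      = ∫ x in Ioi (0:ℝ), x ^ (s₀ - 1) * (Real.exp x / (Real.exp x + 1) ^ 2) := by
    refine setIntegral_congr_fun measurableSet_Ioi (fun x _ => ?_)
    rw [density_eq]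
  -- step 2: integration by parts
  have hparts := parts_eq hs1
  set J : ℝ := ∫ x in Ioi (0:ℝ), x ^ (s₀ - 1 - 1) * (Real.exp x + 1)⁻¹ with hJdef
  -- step 3: J as a Mellin transform
  have hJmel : mellin Ffd w = ((J : ℝ) : ℂ) := by
    have h0 : ((J : ℝ) : ℂ) = ∫ x in Ioi (0:ℝ), ((x ^ (s₀ - 1 - 1) * (Real.exp x + 1)⁻¹ : ℝ) : ℂ) := by
      rw [hJdef]
      exact integral_ofReal.symm
    rw [h0, mellin]
    refine setIntegral_congr_fun measurableSet_Ioi (fun t ht => ?_)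
    rw [smul_eq_mul]
    unfold Ffd
    rw [show w - 1 = ((s₀ - 1 - 1 : ℝ) : ℂ) by rw [hw]; push_cast; ring]
    rw [← Complex.ofReal_cpow (le_of_lt ht), ← Complex.ofReal_mul]
  have hMel := mellin_Ffd_eq hwre hwne1
  rw [hJmel] at hMel
  -- pieces for matching the target
  have e1 : (Real.Gamma s₀ : ℂ) = w * Complex.Gamma w := by
    rw [← Complex.Gamma_ofReal, show ((s₀ : ℝ) : ℂ) = w + 1 by rw [hw]; push_cast; ring,
      Complex.Gamma_add_one _ hwne]
  have e2 : (((2:ℝ) ^ (2 - s₀) : ℝ) : ℂ) = (2:ℂ) ^ ((1:ℂ) - w) := by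
    rw [Complex.ofReal_cpow (by norm_num : (0:ℝ) ≤ 2)]
    norm_num
    congr 1
    rw [hw]
    push_cast
    ring
  have e3 : (n : ℂ) / 2 - 1 = w := by
    rw [hw, hs₀]
    push_cast
    ring
  have hfirst : ((∫ x in Ioi (0 : ℝ),
        x ^ (s₀ - 1) * (Real.exp (-x) / (1 + Real.exp (-x)) ^ 2) : ℝ) : ℂ) =
      (Real.Gamma s₀ : ℂ) * (1 - (((2 : ℝ) ^ (2 - s₀) : ℝ) : ℂ)) *
        riemannZeta ((n : ℂ) / 2 - 1) := by
    rw [hIeq, hparts, Complex.ofReal_mul, hMel, ← hw, e1, e2, e3]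
    ring
  refine ⟨hfirst, ?_⟩
  -- second part
  rw [hfirst]
  set Z : ℂ := riemannZeta ((n : ℂ) / 2 - 1) with hZ
  -- real scalar identity
  have hΓpos : 0 < Real.Gamma s₀ := Real.Gamma_pos_of_pos (by linarith)
  have hA : (1 : ℝ) - 2 ^ (2 - s₀) ≠ 0 := by
    intro h
    have h2 : (2:ℝ) ^ (2 - s₀) = 1 := by linarith
    have := congrArg Real.log h2
    rw [Real.log_rpow (by norm_num) (2 - s₀), Real.log_one] at this
    have hlog : Real.log 2 ≠ 0 := by
      have := Real.log_pos (by norm_num : (1:ℝ) < 2)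
      linarith
    have : 2 - s₀ = 0 := by
      rcases mul_eq_zero.mp this with h | h
      · exact h
      · exact absurd h hlog
    exact hs2 (by linarith)
  have h2pow : (0:ℝ) < 2 ^ s₀ := Real.rpow_pos_of_pos (by norm_num) _
  have hπpow : (0:ℝ) < π ^ s₀ := Real.rpow_pos_of_pos Real.pi_pos _
  have h2πpow : (0:ℝ) < (2 * π) ^ s₀ := Real.rpow_pos_of_pos (by positivity) _
  have hkey : (2:ℝ) ^ s₀ * (2:ℝ) ^ (2 - s₀) = 4 := by
    rw [← Real.rpow_add (by norm_num : (0:ℝ) < 2)]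
    norm_num
  have hmulpow : (2 * π : ℝ) ^ s₀ = 2 ^ s₀ * π ^ s₀ :=
    Real.mul_rpow (by norm_num) Real.pi_pos.le
  have hreal : Real.Gamma s₀ / (2 * π) ^ s₀ * (Real.Gamma s₀ * (1 - 2 ^ (2 - s₀)))⁻¹
      = π ^ (-s₀) * ((2:ℝ) ^ s₀ - 4)⁻¹ := by
    have h24 : (2:ℝ) ^ s₀ - 4 = 2 ^ s₀ * (1 - 2 ^ (2 - s₀)) := by
      rw [mul_sub, mul_one, hkey]
    rw [h24, Real.rpow_neg Real.pi_pos.le, hmulpow]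
    field_simp
  calc ((Real.Gamma s₀ / (2 * π) ^ s₀ : ℝ) : ℂ) *
        ((Real.Gamma s₀ : ℂ) * (1 - (((2:ℝ) ^ (2 - s₀) : ℝ) : ℂ)) * Z)⁻¹
      = ((Real.Gamma s₀ / (2 * π) ^ s₀ * (Real.Gamma s₀ * (1 - 2 ^ (2 - s₀)))⁻¹ : ℝ) : ℂ)
        * Z⁻¹ := by
        push_cast
        rw [mul_inv, mul_inv]
        ring
  _ = ((π ^ (-s₀) * ((2:ℝ) ^ s₀ - 4)⁻¹ : ℝ) : ℂ) * Z⁻¹ := by rw [hreal]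
  _ = ((π ^ (-s₀) : ℝ) : ℂ) * ((((2:ℝ) ^ s₀ - 4 : ℝ) : ℂ) * Z)⁻¹ := by
        push_cast
        rw [mul_inv]
        ring
end

section
/- For every integer m ≥ 1, \(\zeta(2m+1) = (-1)^{m+1}\,\frac{(2\pi)^{2m+1}}{2\,(2m+1)!}\,\int_0^{1} B_{2m+1}(u)\,\cot(\pi u)\,du\), where \(B_{2m+1}(u)\) is the (2m+1)-th Bernoulli polynomial and ζ is the Riemann zeta function. -/
open Real MeasureTheory intervalIntegral

open Set

private lemma abs_sin_nat_mul_le (n : ℕ) (θ : ℝ) : |Real.sin (n * θ)| ≤ n * |Real.sin θ| := by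
  induction n with
  | zero => simp
  | succ n ih =>
    have h : ((n : ℝ) + 1) * θ = n * θ + θ := by ring
    push_cast
    rw [h, Real.sin_add]
    calc |Real.sin (n*θ) * Real.cos θ + Real.cos (n*θ) * Real.sin θ|
        ≤ |Real.sin (n*θ) * Real.cos θ| + |Real.cos (n*θ) * Real.sin θ| := abs_add_le _ _
      _ ≤ |Real.sin (n*θ)| * 1 + 1 * |Real.sin θ| := by
          rw [abs_mul, abs_mul]
          gcongr
          · exact Real.abs_cos_le_one θ
          · exact Real.abs_cos_le_one _
      _ ≤ (n:ℝ) * |Real.sin θ| + 1 * |Real.sin θ| := by simpa using ih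
      _ = ((n:ℝ) + 1) * |Real.sin θ| := by ring

private lemma sincot_bound (n : ℕ) (u : ℝ) :
    |Real.sin (2*π*n*u) * Real.cot (π*u)| ≤ 2*n := by
  rw [Real.cot_eq_cos_div_sin]
  rcases eq_or_ne (Real.sin (π*u)) 0 with h | h
  · simp [h]
  · have hs : 0 < |Real.sin (π*u)| := abs_pos.mpr h
    have h1 : |Real.sin (2*π*(n:ℝ)*u)| ≤ (2*n) * |Real.sin (π*u)| := by
      have := abs_sin_nat_mul_le (2*n) (π*u)
      have he : ((2*n : ℕ) : ℝ) * (π*u) = 2*π*(n:ℝ)*u := by push_cast; ring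
      rw [he] at this
      calc |Real.sin (2*π*(n:ℝ)*u)| ≤ ((2*n : ℕ) : ℝ) * |Real.sin (π*u)| := this
        _ = (2*n) * |Real.sin (π*u)| := by push_cast; ring
    rw [abs_mul, abs_div]
    calc |Real.sin (2*π*(n:ℝ)*u)| * (|Real.cos (π*u)| / |Real.sin (π*u)|)
        ≤ ((2*n) * |Real.sin (π*u)|) * (1 / |Real.sin (π*u)|) := by
          gcongr
          exact Real.abs_cos_le_one _
      _ = 2*n := by field_simp

private lemma meas_sincot (n : ℕ) :
    Measurable (fun u : ℝ => Real.sin (2*π*n*u) * Real.cot (π*u)) := by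
  have hc : Measurable fun u : ℝ => Real.cot (π*u) := by
    simp only [Real.cot_eq_cos_div_sin]
    exact (Real.measurable_cos.comp (measurable_id.const_mul π)).div
      (Real.measurable_sin.comp (measurable_id.const_mul π))
  exact (Real.measurable_sin.comp (measurable_id.const_mul _)).mul hc

private lemma int_sincot (n : ℕ) :
    IntegrableOn (fun u : ℝ => Real.sin (2*π*n*u) * Real.cot (π*u)) (Ioc (0:ℝ) 1) := by
  apply Integrable.mono' (integrable_const (2*(n:ℝ)))
  · exact (meas_sincot n).aestronglyMeasurable
  · exact Filter.Eventually.of_forall fun u => by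
      rw [Real.norm_eq_abs]; exact sincot_bound n u

private lemma integral_cos_two_pi (k : ℕ) (hk : 1 ≤ k) :
    ∫ u in (0:ℝ)..1, Real.cos (2*π*k*u) = 0 := by
  have hπ := Real.pi_pos
  have hk0 : (0:ℝ) < (k:ℝ) := by exact_mod_cast hk
  have hc : (2*π*(k:ℝ)) ≠ 0 := by positivity
  have h1 := intervalIntegral.integral_comp_mul_left (a := (0:ℝ)) (b := 1)
    (f := fun x => Real.cos x) hc
  have h2 : Real.sin (2*π*(k:ℝ)) = 0 := by
    have h3 := Real.sin_nat_mul_pi (2*k)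
    rwa [show ((2*k : ℕ) : ℝ) * π = 2*π*(k:ℝ) by push_cast; ring] at h3
  simp only [mul_zero, mul_one] at h1
  rw [h1, _root_.integral_cos, Real.sin_zero, sub_zero, h2, smul_zero]

private lemma trig_step (a θ : ℝ) :
    Real.sin (a + 2*θ) * Real.cos θ =
      Real.sin a * Real.cos θ + (Real.cos (a + 2*θ) + Real.cos a) * Real.sin θ := by
  rw [Real.sin_add, Real.cos_add, Real.sin_two_mul, Real.cos_two_mul]
  linear_combination (2 * Real.sin a * Real.cos θ) * (Real.sin_sq_add_cos_sq θ)

private lemma step_identity (n : ℕ) {u : ℝ} (h : Real.sin (π*u) ≠ 0) :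
    Real.sin (2*π*((n:ℝ)+1)*u) * Real.cot (π*u) =
      Real.sin (2*π*(n:ℝ)*u) * Real.cot (π*u)
        + (Real.cos (2*π*((n:ℝ)+1)*u) + Real.cos (2*π*(n:ℝ)*u)) := by
  have key := trig_step (2*π*(n:ℝ)*u) (π*u)
  rw [Real.cot_eq_cos_div_sin]
  rw [show 2*π*((n:ℝ)+1)*u = 2*π*(n:ℝ)*u + 2*(π*u) by ring] at *
  generalize 2*π*(n:ℝ)*u = a at key ⊢
  generalize π*u = θ at key h ⊢
  field_simp
  linear_combination key

private lemma sin_pi_ne {u : ℝ} (h0 : 0 < u) (h1 : u < 1) : Real.sin (π*u) ≠ 0 := by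
  have hπ := Real.pi_pos
  refine ne_of_gt (Real.sin_pos_of_pos_of_lt_pi (by positivity) ?_)
  calc π * u < π * 1 := by gcongr
    _ = π := mul_one π

private lemma sincot_intervalIntegrable (n : ℕ) :
    IntervalIntegrable (fun u : ℝ => Real.sin (2*π*n*u) * Real.cot (π*u)) volume 0 1 :=
  (intervalIntegrable_iff_integrableOn_Ioc_of_le zero_le_one).mpr (int_sincot n)

private lemma J_step (n : ℕ) :
    (∫ u in (0:ℝ)..1, Real.sin (2*π*((n:ℝ)+1)*u) * Real.cot (π*u)) =
      (∫ u in (0:ℝ)..1, Real.sin (2*π*(n:ℝ)*u) * Real.cot (π*u))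
        + ((∫ u in (0:ℝ)..1, Real.cos (2*π*((n:ℝ)+1)*u))
            + ∫ u in (0:ℝ)..1, Real.cos (2*π*(n:ℝ)*u)) := by
  have hae : ∀ᵐ u : ℝ ∂volume, u ∈ Set.uIoc (0:ℝ) 1 →
      Real.sin (2*π*((n:ℝ)+1)*u) * Real.cot (π*u) =
        Real.sin (2*π*(n:ℝ)*u) * Real.cot (π*u)
          + (Real.cos (2*π*((n:ℝ)+1)*u) + Real.cos (2*π*(n:ℝ)*u)) := by
    filter_upwards [(Set.countable_singleton (1:ℝ)).ae_notMem volume] with u hu1 hu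
    have hu' : u ∈ Set.Ioc (0:ℝ) 1 := by rwa [Set.uIoc_of_le zero_le_one] at hu
    have h1 : u < 1 := lt_of_le_of_ne hu'.2 (by simpa using hu1)
    exact step_identity n (sin_pi_ne hu'.1 h1)
  rw [intervalIntegral.integral_congr_ae hae]
  have hcos : ∀ c : ℝ, IntervalIntegrable (fun u : ℝ => Real.cos (c*u)) volume 0 1 :=
    fun c => (Real.continuous_cos.comp (continuous_const.mul continuous_id)).intervalIntegrable 0 1
  have h1 : IntervalIntegrable (fun u : ℝ => Real.sin (2*π*(n:ℝ)*u) * Real.cot (π*u)) volume 0 1 :=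
    sincot_intervalIntegrable n
  rw [intervalIntegral.integral_add h1 ((hcos (2*π*((n:ℝ)+1))).add (hcos (2*π*(n:ℝ)))),
    intervalIntegral.integral_add (hcos (2*π*((n:ℝ)+1))) (hcos (2*π*(n:ℝ)))]

private lemma J_eq_one : ∀ n : ℕ, 1 ≤ n →
    (∫ u in (0:ℝ)..1, Real.sin (2*π*(n:ℝ)*u) * Real.cot (π*u)) = 1 := by
  intro n hn
  induction n with
  | zero => omega
  | succ n ih =>
    have hstep := J_step n
    push_cast at hstep ⊢
    rcases Nat.eq_or_lt_of_le hn with h | h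
    · -- n + 1 = 1, i.e. n = 0
      have hn0 : n = 0 := by omega
      subst hn0
      norm_num at hstep
      have e1 := integral_cos_two_pi 1 le_rfl
      norm_num at e1
      norm_num
      rw [hstep]
    · have hn1 : 1 ≤ n := by omega
      have ihn := ih hn1
      push_cast at ihn
      rw [hstep, ihn]
      have e1 := integral_cos_two_pi (n+1) (by omega)
      have e2 := integral_cos_two_pi n hn1
      push_cast at e1 e2
      rw [e1, e2]; ring

/-- For every integer `m ≥ 1`,
`ζ(2m+1) = (-1)^(m+1) (2π)^(2m+1)/(2 (2m+1)!) ∫_0^1 B_{2m+1}(u) cot(π u) du`,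
where `B_{2m+1}` is the `(2m+1)`-th Bernoulli polynomial (generating function
`t e^{tx}/(e^t - 1)`, Mathlib's `Polynomial.bernoulli`) and `ζ` is the Riemann zeta
function. -/
theorem zeta_odd_integral_representation (m : ℕ) (hm : 1 ≤ m) :
    riemannZeta ((2 * m + 1 : ℕ) : ℂ) =
      (((-1 : ℝ) ^ (m + 1) * (2 * π) ^ (2 * m + 1) / (2 * ((2 * m + 1).factorial : ℝ)) *
        ∫ u in (0 : ℝ)..1,
          (Polynomial.aeval u (Polynomial.bernoulli (2 * m + 1)) : ℝ) *
            Real.cot (π * u) : ℝ) : ℂ) := by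
  have hπ := Real.pi_pos
  set F : ℕ → ℝ → ℝ := fun n u =>
    1/(n:ℝ)^(2*m+1) * (Real.sin (2*π*n*u) * Real.cot (π*u)) with hFdef
  have hFint : ∀ n, Integrable (F n) (volume.restrict (Ioc (0:ℝ) 1)) := fun n =>
    (int_sincot n).const_mul _
  have hnorm : ∀ n : ℕ, (∫ u in Ioc (0:ℝ) 1, ‖F n u‖) ≤ 2 * (1/(n:ℝ)^(2*m)) := by
    intro n
    have hb : ∀ u : ℝ, ‖F n u‖ ≤ 2 * (1/(n:ℝ)^(2*m)) := by
      intro u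
      rcases Nat.eq_zero_or_pos n with h | h
      · subst h; simp [F]
      · have hn0 : (0:ℝ) < (n:ℝ) := by exact_mod_cast h
        rw [Real.norm_eq_abs, abs_mul,
          abs_of_nonneg (by positivity : (0:ℝ) ≤ 1/(n:ℝ)^(2*m+1))]
        calc 1/(n:ℝ)^(2*m+1) * |Real.sin (2*π*n*u) * Real.cot (π*u)|
            ≤ 1/(n:ℝ)^(2*m+1) * (2*n) :=
              mul_le_mul_of_nonneg_left (sincot_bound n u) (by positivity)
          _ = 2 * (1/(n:ℝ)^(2*m)) := by
              rw [pow_succ]; field_simp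
    calc (∫ u in Ioc (0:ℝ) 1, ‖F n u‖)
        ≤ ∫ _ in Ioc (0:ℝ) 1, 2 * (1/(n:ℝ)^(2*m)) :=
          integral_mono (hFint n).norm (integrable_const _) (fun u => hb u)
      _ = 2 * (1/(n:ℝ)^(2*m)) := by simp [Real.volume_Ioc]
  have hsummable : Summable (fun n : ℕ => ∫ u in Ioc (0:ℝ) 1, ‖F n u‖) :=
    Summable.of_nonneg_of_le (fun n => integral_nonneg fun u => norm_nonneg _) hnorm
      ((summable_one_div_nat_pow.mpr (by omega)).mul_left 2)
  have hmain := MeasureTheory.hasSum_integral_of_summable_integral_norm hFint hsummable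
  have hterm : (fun n : ℕ => ∫ u in Ioc (0:ℝ) 1, F n u) =
      fun n : ℕ => 1/(n:ℝ)^(2*m+1) := by
    funext n
    rcases Nat.eq_zero_or_pos n with h | h
    · subst h; simp [F]
    · have hJ := J_eq_one n h
      rw [intervalIntegral.integral_of_le zero_le_one] at hJ
      simp only [F]
      rw [MeasureTheory.integral_const_mul, hJ, mul_one]
  rw [hterm] at hmain
  have hK : Set.EqOn (fun a => ∑' n : ℕ, F n a)
      (fun a => (-1:ℝ)^(m+1) * (2*π)^(2*m+1) / 2 / ((2*m+1).factorial : ℝ) *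
        (((Polynomial.map (algebraMap ℚ ℝ) (Polynomial.bernoulli (2*m+1))).eval a) *
          Real.cot (π*a))) (Ioc (0:ℝ) 1) := by
    intro a ha
    have hsin := hasSum_one_div_nat_pow_mul_sin (k := m) (by omega) ⟨le_of_lt ha.1, ha.2⟩
    have ht := (hsin.mul_right (Real.cot (π*a))).tsum_eq
    simp only
    rw [← mul_assoc, ← ht]
    exact tsum_congr fun n => by simp [F, mul_assoc]
  have haev : ∀ u : ℝ, (Polynomial.aeval u (Polynomial.bernoulli (2*m+1)) : ℝ) =
      (Polynomial.map (algebraMap ℚ ℝ) (Polynomial.bernoulli (2*m+1))).eval u := fun u => by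
    rw [Polynomial.aeval_def, Polynomial.eval_map]
  have hinteq : (∫ a in Ioc (0:ℝ) 1, ∑' n, F n a) =
      (-1:ℝ)^(m+1) * (2*π)^(2*m+1) / (2 * ((2*m+1).factorial : ℝ)) *
        ∫ u in (0:ℝ)..1,
          (Polynomial.aeval u (Polynomial.bernoulli (2*m+1)) : ℝ) * Real.cot (π*u) := by
    rw [MeasureTheory.setIntegral_congr_fun measurableSet_Ioc hK,
      MeasureTheory.integral_const_mul, intervalIntegral.integral_of_le zero_le_one]
    rw [div_div]
    congr 1
    apply MeasureTheory.setIntegral_congr_fun measurableSet_Ioc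
    intro u _
    simp only [haev]
  rw [hinteq] at hmain
  rw [zeta_nat_eq_tsum_of_gt_one (by omega : 1 < 2*m+1)]
  have hre : ∀ n : ℕ, (1/(n:ℂ)^(2*m+1)) = ((1/(n:ℝ)^(2*m+1) : ℝ) : ℂ) := by
    intro n; push_cast; ring
  rw [tsum_congr hre, ← Complex.ofReal_tsum, hmain.tsum_eq]
end

section
/- For every integer m ≥ 1, \(\int_0^{\infty} x^{2m+1}\,\frac{e^{-x}}{(1+e^{-x})^{2}}\,dx = (-1)^{m+1}\,(1-2^{-2m})\,\frac{(2\pi)^{2m+1}}{2}\,\int_0^{1} B_{2m+1}(u)\,\cot(\pi u)\,du\), where \(B_{2m+1}(u)\) is the (2m+1)-th Bernoulli polynomial. -/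
set_option maxHeartbeats 2000000
set_option maxRecDepth 8000

open Real MeasureTheory Set intervalIntegral
private lemma aux_exp_integrable (s n : ℕ) (hn : n ≠ 0) :
    IntegrableOn (fun x : ℝ => x^s * Real.exp (-(n*x))) (Ioi 0) := by
  have hn' : (0:ℝ) < n := by positivity
  have h := integrableOn_rpow_mul_exp_neg_mul_rpow (p := 1) (s := (s:ℝ)) (b := (n:ℝ))
    (by exact_mod_cast neg_one_lt_zero.trans_le (Nat.cast_nonneg s)) one_pos hn'
  refine h.congr_fun (fun x hx => ?_) measurableSet_Ioi
  dsimp only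
  rw [Real.rpow_one, Real.rpow_natCast, neg_mul]

private lemma aux_exp_int (s : ℕ) (n : ℕ) (hn : n ≠ 0) :
    ∫ x in Ioi (0:ℝ), x^s * Real.exp (-(n*x)) = (Nat.factorial s : ℝ) / (n:ℝ)^(s+1) := by
  have hn' : (0:ℝ) < n := by positivity
  have h := Real.integral_rpow_mul_exp_neg_mul_Ioi (a := (s:ℝ)+1) (r := (n:ℝ))
    (by positivity) hn'
  have h2 : ∀ x ∈ Ioi (0:ℝ), x ^ ((s:ℝ)+1-1) * Real.exp (-(n*x)) = x^s * Real.exp (-(n*x)) := by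
    intro x hx
    rw [add_sub_cancel_right, Real.rpow_natCast]
  rw [setIntegral_congr_fun measurableSet_Ioi h2] at h
  rw [h]
  have h3 : ((1:ℝ)/n) ^ ((s:ℝ)+1) = ((1:ℝ)/n)^(s+1 : ℕ) := by
    rw [← Real.rpow_natCast (1/(n:ℝ)) (s+1)]; push_cast; ring_nf
  have h4 : Real.Gamma ((s:ℝ)+1) = (Nat.factorial s : ℝ) := Real.Gamma_nat_eq_factorial s
  rw [h3, h4]
  field_simp
  rw [← mul_pow, one_div, inv_mul_cancel₀ hn'.ne', one_pow]

private lemma partA (s : ℕ) (hs : 2 ≤ s) :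
    ∫ x in Ioi (0:ℝ), x ^ s * (Real.exp (-x) / (1 + Real.exp (-x))^2)
      = (Nat.factorial s : ℝ) * ∑' n : ℕ, (-1:ℝ)^(n+1) / (n:ℝ)^s := by
  set F : ℕ → ℝ → ℝ := fun n x => (-1:ℝ)^(n+1) * n * (x^s * Real.exp (-(n*x))) with hF
  have hint : ∀ n : ℕ, Integrable (F n) (volume.restrict (Ioi 0)) := by
    intro n
    rcases eq_or_ne n 0 with rfl | hn
    · simpa [hF] using (integrable_zero ℝ ℝ (volume.restrict (Ioi (0:ℝ))))
    · exact ((aux_exp_integrable s n hn).const_mul _)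
  have hval : ∀ n : ℕ, n ≠ 0 →
      ∫ x in Ioi (0:ℝ), F n x = (-1:ℝ)^(n+1) * n * ((Nat.factorial s : ℝ) / (n:ℝ)^(s+1)) := by
    intro n hn
    rw [hF]
    simp only []
    rw [MeasureTheory.integral_const_mul, aux_exp_int s n hn]
  have hnorm : ∀ n : ℕ, n ≠ 0 →
      ∫ x in Ioi (0:ℝ), ‖F n x‖ = (n:ℝ) * ((Nat.factorial s : ℝ) / (n:ℝ)^(s+1)) := by
    intro n hn
    have : ∀ x ∈ Ioi (0:ℝ), ‖F n x‖ = (n:ℝ) * (x^s * Real.exp (-(n*x))) := by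
      intro x hx
      have hx' : (0:ℝ) < x := hx
      rw [hF]
      simp only [norm_mul, norm_pow, norm_neg, norm_one, one_pow, one_mul, Real.norm_eq_abs]
      rw [abs_of_nonneg (by positivity : (0:ℝ) ≤ (n:ℝ)), abs_of_pos hx', Real.abs_exp]
    rw [setIntegral_congr_fun measurableSet_Ioi this, MeasureTheory.integral_const_mul,
      aux_exp_int s n hn]
  have hsummax : Summable (fun n : ℕ => (Nat.factorial s : ℝ) * (1 / (n:ℝ)^s)) := by
    exact (summable_one_div_nat_pow.mpr (by omega)).mul_left _
  have hsumnorm : Summable (fun n : ℕ => ∫ x in Ioi (0:ℝ), ‖F n x‖) := by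
    refine hsummax.congr (fun n => ?_)
    rcases eq_or_ne n 0 with rfl | hn
    · have h0 : (0:ℝ)^s = 0 := zero_pow (by omega)
      simp [hF, h0]
    · rw [hnorm n hn]
      have hn' : (0:ℝ) < n := by positivity
      rw [pow_succ]
      field_simp
  have hpt : ∀ x ∈ Ioi (0:ℝ),
      ∑' n : ℕ, F n x = x ^ s * (Real.exp (-x) / (1 + Real.exp (-x))^2) := by
    intro x hx
    have hx' : (0:ℝ) < x := hx
    have hr : ‖-Real.exp (-x)‖ < 1 := by
      rw [norm_neg, Real.norm_eq_abs, abs_of_pos (Real.exp_pos _)]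
      exact Real.exp_lt_one_iff.mpr (by linarith)
    have h := (hasSum_coe_mul_geometric_of_norm_lt_one hr).mul_left (-(x^s))
    have heq : (fun n : ℕ => -(x^s) * ((n:ℝ) * (-Real.exp (-x))^n)) = fun n => F n x := by
      funext n
      show -(x^s) * ((n:ℝ) * (-Real.exp (-x))^n)
          = (-1:ℝ)^(n+1) * n * (x^s * Real.exp (-(n*x)))
      rw [neg_pow, ← Real.exp_nat_mul, show (n:ℝ)*(-x) = -((n:ℝ)*x) by ring]
      ring
    rw [heq] at h
    rw [h.tsum_eq]
    have h1 : 1 - -Real.exp (-x) = 1 + Real.exp (-x) := by ring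
    rw [h1]
    ring
  rw [← setIntegral_congr_fun measurableSet_Ioi hpt,
    ← MeasureTheory.integral_tsum_of_summable_integral_norm hint hsumnorm]
  rw [← tsum_mul_left]
  refine tsum_congr (fun n => ?_)
  rcases eq_or_ne n 0 with rfl | hn
  · have hs0 : (0:ℝ)^s = 0 := zero_pow (by omega)
    have hF0 : (fun x : ℝ => F 0 x) = (fun _ : ℝ => (0:ℝ)) := by
      funext x; rw [hF]; push_cast; ring
    rw [show (∫ x in Ioi (0:ℝ), F 0 x) = 0 from by rw [hF0]; exact integral_zero _ _]
    simp [zero_pow (show s ≠ 0 by omega)]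
  · rw [hval n hn]
    have hn' : ((n:ℝ)) ≠ 0 := by positivity
    rw [pow_succ]
    field_simp
    ring


private lemma partEta (s : ℕ) (hs : 2 ≤ s) :
    ∑' n : ℕ, (-1:ℝ)^(n+1) / (n:ℝ)^s
      = (1 - 2 * ((2:ℝ)^s)⁻¹) * ∑' n : ℕ, 1/(n:ℝ)^s := by
  have hg : Summable (fun n : ℕ => 1/(n:ℝ)^s) := summable_one_div_nat_pow.mpr (by omega)
  have hge : Summable (fun k : ℕ => 1/((2*k : ℕ):ℝ)^s) :=
    hg.comp_injective (fun a b hab => by omega)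
  have hgo : Summable (fun k : ℕ => 1/((2*k+1 : ℕ):ℝ)^s) :=
    hg.comp_injective (fun a b hab => by omega)
  have hgsplit := tsum_even_add_odd (f := fun n : ℕ => 1/(n:ℝ)^s) hge hgo
  have heven : ∑' k : ℕ, 1/((2*k : ℕ):ℝ)^s = ((2:ℝ)^s)⁻¹ * ∑' n : ℕ, 1/(n:ℝ)^s := by
    rw [← tsum_mul_left]
    refine tsum_congr (fun k => ?_)
    push_cast
    rw [mul_pow, one_div, one_div, mul_inv]
  have hfe : ∀ k : ℕ, (-1:ℝ)^(2*k+1) / ((2*k : ℕ):ℝ)^s = -(1/((2*k : ℕ):ℝ)^s) := by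
    intro k
    rw [Odd.neg_one_pow ⟨k, by ring⟩]
    ring
  have hfo : ∀ k : ℕ, (-1:ℝ)^(2*k+1+1) / ((2*k+1 : ℕ):ℝ)^s = 1/((2*k+1 : ℕ):ℝ)^s := by
    intro k
    rw [Even.neg_one_pow ⟨k+1, by ring⟩]
  have hfes : Summable (fun k : ℕ => (-1:ℝ)^(2*k+1) / ((2*k : ℕ):ℝ)^s) :=
    hge.neg.congr (fun k => (hfe k).symm)
  have hfos : Summable (fun k : ℕ => (-1:ℝ)^(2*k+1+1) / ((2*k+1 : ℕ):ℝ)^s) :=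
    hgo.congr (fun k => (hfo k).symm)
  have hfsplit := tsum_even_add_odd (f := fun n : ℕ => (-1:ℝ)^(n+1) / (n:ℝ)^s) hfes hfos
  rw [← hfsplit]
  rw [tsum_congr hfe, tsum_congr hfo, tsum_neg, heven]
  have hodd : ∑' k : ℕ, 1/((2*k+1 : ℕ):ℝ)^s
      = ∑' n : ℕ, 1/(n:ℝ)^s - ((2:ℝ)^s)⁻¹ * ∑' n : ℕ, 1/(n:ℝ)^s := by
    rw [← heven]; linarith [hgsplit]
  rw [hodd]
  ring

private noncomputable def auxD (n : ℕ) (θ : ℝ) : ℝ :=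
  ∑ j ∈ Finset.range n, (Real.cos (2*j*θ) + Real.cos (2*j*θ + 2*θ))

private lemma auxD_trig (n : ℕ) (θ : ℝ) :
    Real.sin (2*n*θ) * Real.cos θ = Real.sin θ * auxD n θ := by
  induction n with
  | zero => simp [auxD]
  | succ n ih =>
    rw [auxD, Finset.sum_range_succ, mul_add, ← auxD, ← ih]
    have h1 : (2*((n:ℝ)+1))*θ = 2*n*θ + 2*θ := by ring
    push_cast
    rw [h1, Real.sin_add, Real.cos_add (2*(n:ℝ)*θ), Real.sin_two_mul, Real.cos_two_mul]
    linear_combination (2 * Real.sin (2*(n:ℝ)*θ) * Real.cos θ) * (Real.sin_sq_add_cos_sq θ)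

private lemma auxD_bound (n : ℕ) (θ : ℝ) : |auxD n θ| ≤ 2*n := by
  calc |auxD n θ| ≤ ∑ j ∈ Finset.range n, |Real.cos (2*j*θ) + Real.cos (2*j*θ + 2*θ)| :=
        Finset.abs_sum_le_sum_abs _ _
    _ ≤ ∑ j ∈ Finset.range n, 2 := by
        refine Finset.sum_le_sum (fun j _ => ?_)
        calc |Real.cos (2*j*θ) + Real.cos (2*j*θ + 2*θ)|
            ≤ |Real.cos (2*j*θ)| + |Real.cos (2*j*θ + 2*θ)| := abs_add_le _ _
          _ ≤ 1 + 1 := add_le_add (Real.abs_cos_le_one _) (Real.abs_cos_le_one _)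
          _ = 2 := by norm_num
    _ = 2*n := by rw [Finset.sum_const, Finset.card_range]; push_cast; ring

private lemma aux_cos_int (j : ℕ) (hj : j ≠ 0) :
    ∫ u in (0:ℝ)..1, Real.cos (2*j*(π*u)) = 0 := by
  have h : ∀ u : ℝ, 2*(j:ℝ)*(π*u) = (2*j*π)*u := fun u => by ring
  simp_rw [h]
  have hc : (2*(j:ℝ)*π) ≠ 0 := by positivity
  rw [intervalIntegral.integral_comp_mul_left Real.cos hc]
  simp only [mul_zero, mul_one, integral_cos, Real.sin_zero, sub_zero]
  have : (2*(j:ℝ)*π) = ((2*j : ℕ) : ℝ) * π := by push_cast; ring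
  rw [this, Real.sin_nat_mul_pi, smul_zero]

private lemma aux_cos_cont (c : ℝ) : Continuous (fun u : ℝ => Real.cos (c*(π*u))) :=
  Real.continuous_cos.comp (continuous_const.mul (continuous_const.mul continuous_id))

private lemma auxD_cont (n : ℕ) : Continuous (fun u : ℝ => auxD n (π*u)) := by
  refine continuous_finset_sum _ (fun j _ => ?_)
  have h1 : Continuous (fun u : ℝ => Real.cos (2*(j:ℝ)*(π*u))) := aux_cos_cont _
  have h2 : Continuous (fun u : ℝ => Real.cos (2*(j:ℝ)*(π*u) + 2*(π*u))) := by
    exact Real.continuous_cos.comp (by fun_prop)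
  exact h1.add h2

private lemma auxD_int (n : ℕ) (hn : n ≠ 0) :
    ∫ u in (0:ℝ)..1, auxD n (π*u) = 1 := by
  unfold auxD
  have hci : ∀ j : ℕ, IntervalIntegrable (fun u : ℝ => Real.cos (2*j*(π*u))) volume 0 1 :=
    fun j => (aux_cos_cont _).intervalIntegrable 0 1
  have hkey : ∀ j : ℕ,
      (∫ u in (0:ℝ)..1, (Real.cos (2*j*(π*u)) + Real.cos (2*j*(π*u) + 2*(π*u))))
        = if j = 0 then 1 else 0 := by
    intro j
    have hc1 : ∀ u : ℝ, Real.cos (2*(j:ℝ)*(π*u) + 2*(π*u)) = Real.cos (2*((j+1:ℕ):ℝ)*(π*u)) := by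
      intro u; push_cast; ring_nf
    simp_rw [hc1]
    rw [intervalIntegral.integral_add (hci j) (hci (j+1))]
    rcases eq_or_ne j 0 with rfl | hj
    · rw [aux_cos_int 1 one_ne_zero]
      norm_num
    · rw [aux_cos_int j hj, aux_cos_int (j+1) (Nat.succ_ne_zero j), if_neg hj]
      norm_num
  rw [intervalIntegral.integral_finset_sum]
  · rw [Finset.sum_congr rfl (fun j _ => hkey j),
      Finset.sum_ite_eq' (Finset.range n) 0 (fun _ => (1:ℝ))]
    simp [Finset.mem_range, Nat.pos_of_ne_zero hn]
  · intro j _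
    have hc1 : ∀ u : ℝ, Real.cos (2*(j:ℝ)*(π*u) + 2*(π*u)) = Real.cos (2*((j+1:ℕ):ℝ)*(π*u)) := by
      intro u; push_cast; ring_nf
    simp_rw [hc1]
    exact (hci j).add (hci (j+1))

private lemma partB (m : ℕ) (hm : 1 ≤ m) :
    ((-1:ℝ)^(m+1) * (2*π)^(2*m+1) / 2 / (Nat.factorial (2*m+1) : ℝ)) *
      ∫ u in (0:ℝ)..1,
        (Polynomial.aeval u (Polynomial.bernoulli (2*m+1)) : ℝ) * Real.cot (π*u)
      = ∑' n : ℕ, 1/(n:ℝ)^(2*m+1) := by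
  set C : ℝ := (-1:ℝ)^(m+1) * (2*π)^(2*m+1) / 2 / (Nat.factorial (2*m+1) : ℝ) with hC
  set G : ℕ → ℝ → ℝ :=
    fun n u => 1/(n:ℝ)^(2*m+1) * Real.sin (2*π*n*u) * Real.cot (π*u) with hG
  set h : ℕ → ℝ → ℝ := fun n u => 1/(n:ℝ)^(2*m+1) * auxD n (π*u) with hh
  have hhcont : ∀ n : ℕ, Continuous (h n) := fun n => continuous_const.mul (auxD_cont n)
  -- pointwise identity on Ioo
  have hGh : ∀ n : ℕ, ∀ u ∈ Ioo (0:ℝ) 1, G n u = h n u := by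
    intro n u hu
    have hθ1 : 0 < π*u := by have := pi_pos; nlinarith [hu.1]
    have hθ2 : π*u < π := by nlinarith [pi_pos, hu.2]
    have hsin : 0 < Real.sin (π*u) := Real.sin_pos_of_pos_of_lt_pi hθ1 hθ2
    have hsin' : Real.sin (π*u) ≠ 0 := ne_of_gt hsin
    have key : auxD n (π*u) = Real.sin (2*(n:ℝ)*(π*u)) * Real.cos (π*u) / Real.sin (π*u) := by
      rw [eq_div_iff hsin']
      linear_combination -(auxD_trig n (π*u))
    have hs2 : Real.sin (2*π*n*u) = Real.sin (2*(n:ℝ)*(π*u)) := by congr 1; ring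
    rw [hG, hh]
    simp only []
    rw [Real.cot_eq_cos_div_sin, key, hs2]
    ring
  have hae : ∀ n : ℕ, G n =ᵐ[volume.restrict (Ioc (0:ℝ) 1)] h n := by
    intro n
    rw [← Measure.restrict_congr_set Ioo_ae_eq_Ioc]
    filter_upwards [ae_restrict_mem measurableSet_Ioo] with u hu using hGh n u hu
  have hGint : ∀ n : ℕ, Integrable (G n) (volume.restrict (Ioc (0:ℝ) 1)) := by
    intro n
    exact ((hhcont n).integrableOn_Ioc).congr (hae n).symm
  have hval : ∀ n : ℕ, n ≠ 0 →
      ∫ u in Ioc (0:ℝ) 1, G n u = 1/(n:ℝ)^(2*m+1) := by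
    intro n hn
    rw [integral_congr_ae (hae n)]
    rw [← intervalIntegral.integral_of_le (by norm_num : (0:ℝ) ≤ 1)]
    rw [hh]
    simp only []
    rw [intervalIntegral.integral_const_mul, auxD_int n hn, mul_one]
  have hval0 : ∫ u in Ioc (0:ℝ) 1, G 0 u = 0 := by
    have h0 : G 0 = fun _ : ℝ => (0:ℝ) := by
      funext u; rw [hG]; norm_num
    rw [h0]
    exact MeasureTheory.integral_zero _ _
  -- norm bound
  have hnormval : ∀ n : ℕ, (∫ u in Ioc (0:ℝ) 1, ‖G n u‖) ≤ 2 * (1/(n:ℝ)^(2*m)) := by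
    intro n
    rcases eq_or_ne n 0 with rfl | hn
    · have : ∀ u : ℝ, G 0 u = 0 := by intro u; rw [hG]; norm_num
      have h0 : (0:ℝ)^(2*m) = 0 := zero_pow (by omega)
      simp [funext this, h0]
    · have hb : ∀ u : ℝ, ‖h n u‖ ≤ 2 * (1/(n:ℝ)^(2*m)) := by
        intro u
        rw [hh]
        simp only []
        have hn' : (0:ℝ) < n := by positivity
        rw [norm_mul, Real.norm_eq_abs, Real.norm_eq_abs,
          abs_of_nonneg (by positivity : (0:ℝ) ≤ 1/(n:ℝ)^(2*m+1))]
        calc 1/(n:ℝ)^(2*m+1) * |auxD n (π*u)| ≤ 1/(n:ℝ)^(2*m+1) * (2*n) := by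
              exact mul_le_mul_of_nonneg_left (auxD_bound n (π*u)) (by positivity)
          _ = 2 * (1/(n:ℝ)^(2*m)) := by
              rw [pow_succ]; field_simp
      have heq : (∫ u in Ioc (0:ℝ) 1, ‖G n u‖) = ∫ u in Ioc (0:ℝ) 1, ‖h n u‖ :=
        integral_congr_ae ((hae n).fun_comp norm)
      rw [heq]
      calc (∫ u in Ioc (0:ℝ) 1, ‖h n u‖) ≤ ∫ _ in Ioc (0:ℝ) 1, 2 * (1/(n:ℝ)^(2*m)) := by
            refine setIntegral_mono_on ((hhcont n).integrableOn_Ioc).norm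
              (integrableOn_const (by rw [Real.volume_Ioc]; norm_num))
              measurableSet_Ioc (fun u _ => hb u)
        _ = 2 * (1/(n:ℝ)^(2*m)) := by
            rw [setIntegral_const, Real.volume_real_Ioc_of_le zero_le_one]
            norm_num
  have hsumnorm : Summable (fun n : ℕ => ∫ u in Ioc (0:ℝ) 1, ‖G n u‖) := by
    refine Summable.of_nonneg_of_le (fun n => ?_) hnormval
      ((Real.summable_one_div_nat_pow.mpr (by omega)).mul_left 2)
    exact integral_nonneg (fun u => norm_nonneg _)
  -- pointwise tsum
  have hpt : ∀ u ∈ Ioc (0:ℝ) 1,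
      ∑' n : ℕ, G n u
        = C * ((Polynomial.aeval u (Polynomial.bernoulli (2*m+1)) : ℝ) * Real.cot (π*u)) := by
    intro u hu
    have hx : u ∈ Icc (0:ℝ) 1 := ⟨le_of_lt hu.1, hu.2⟩
    have hs := (hasSum_one_div_nat_pow_mul_sin (k := m) (by omega) hx).mul_right (Real.cot (π*u))
    have heq : (fun n : ℕ => 1/(n:ℝ)^(2*m+1) * Real.sin (2*π*n*u) * Real.cot (π*u))
        = fun n : ℕ => G n u := by
      funext n; rw [hG]
    rw [heq] at hs
    rw [hs.tsum_eq, hC]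
    have hev : (Polynomial.map (algebraMap ℚ ℝ) (Polynomial.bernoulli (2*m+1))).eval u
        = (Polynomial.aeval u (Polynomial.bernoulli (2*m+1)) : ℝ) := by
      rw [Polynomial.eval_map, Polynomial.aeval_def]
    rw [hev]
    ring
  -- assemble
  have hIoc : (∫ u in (0:ℝ)..1,
      (Polynomial.aeval u (Polynomial.bernoulli (2*m+1)) : ℝ) * Real.cot (π*u))
      = ∫ u in Ioc (0:ℝ) 1,
        (Polynomial.aeval u (Polynomial.bernoulli (2*m+1)) : ℝ) * Real.cot (π*u) :=
    intervalIntegral.integral_of_le (by norm_num)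
  rw [hIoc, ← MeasureTheory.integral_const_mul,
    ← setIntegral_congr_fun measurableSet_Ioc hpt,
    ← MeasureTheory.integral_tsum_of_summable_integral_norm hGint hsumnorm]
  refine tsum_congr (fun n => ?_)
  rcases eq_or_ne n 0 with rfl | hn
  · rw [hval0]
    norm_num
  · exact hval n hn

/-- For every integer `m ≥ 1`,
`∫_0^∞ x^(2m+1) e^(-x)/(1+e^(-x))^2 dx
   = (-1)^(m+1) (1 - 2^(-2m)) ((2π)^(2m+1)/2) ∫_0^1 B_{2m+1}(u) cot(π u) du`,
where `B_{2m+1}` is the `(2m+1)`-th Bernoulli polynomial (Mathlib's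
`Polynomial.bernoulli`). -/
theorem normalizing_integral_odd_power (m : ℕ) (hm : 1 ≤ m) :
    ∫ x in Ioi (0 : ℝ), x ^ (2 * m + 1) * (Real.exp (-x) / (1 + Real.exp (-x)) ^ 2) =
      (-1 : ℝ) ^ (m + 1) * (1 - ((2 : ℝ) ^ (2 * m))⁻¹) * ((2 * π) ^ (2 * m + 1) / 2) *
        ∫ u in (0 : ℝ)..1,
          (Polynomial.aeval u (Polynomial.bernoulli (2 * m + 1)) : ℝ) *
            Real.cot (π * u) := by
  have hs : 2 ≤ 2*m+1 := by omega
  rw [partA (2*m+1) hs, partEta (2*m+1) hs, ← partB m hm]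
  have hfac : (Nat.factorial (2*m+1) : ℝ) ≠ 0 := by
    exact_mod_cast Nat.factorial_ne_zero (2*m+1)
  have h2 : ((2:ℝ)^(2*m+1)) = 2^(2*m) * 2 := by rw [pow_succ]
  rw [h2]
  have h2m : ((2:ℝ)^(2*m)) ≠ 0 := by positivity
  field_simp
end

section
/- For every real t > 0, \(\int_0^{\infty} w^{-1/2}\,\left(\sum_{k=1}^{\infty}(-1)^{k-1}\,k^{3/2}\,e^{-k(t+w)}\right) dw = \sqrt{\pi}\,\frac{e^{-t}}{(1+e^{-t})^{2}}\), where the series \(\sum_{k\ge 1}(-1)^{k-1}k^{3/2}e^{-ks}\) converges for every s > 0. -/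
open Real MeasureTheory Set

/-- Base integral: `∫_0^∞ w^(-1/2) e^(-cw) dw = √π c^(-1/2)`. -/
lemma base_integral {c : ℝ} (hc : 0 < c) :
    ∫ w in Ioi (0 : ℝ), w ^ (-(1 / 2 : ℝ)) * Real.exp (-(c * w)) =
      Real.sqrt π * c ^ (-(1 / 2 : ℝ)) := by
  have h := Real.integral_rpow_mul_exp_neg_mul_Ioi (a := 1 / 2) (r := c) (by norm_num) hc
  have he : (1 / 2 : ℝ) - 1 = -(1 / 2 : ℝ) := by norm_num
  rw [he] at h
  rw [h, Real.Gamma_one_half_eq, one_div, Real.inv_rpow hc.le, ← Real.rpow_neg hc.le]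
  ring

/-- Base integrability. -/
lemma base_integrable {c : ℝ} (hc : 0 < c) :
    IntegrableOn (fun w : ℝ => w ^ (-(1 / 2 : ℝ)) * Real.exp (-(c * w))) (Ioi 0) := by
  have := integrableOn_rpow_mul_exp_neg_mul_rpow (p := 1) (s := -(1 / 2 : ℝ)) (b := c)
    (by norm_num) one_pos hc
  simpa [Real.rpow_one] using this

lemma aux_summable {s : ℝ} (hs : 0 < s) :
    Summable (fun j : ℕ =>
      (-1 : ℝ) ^ j * ((j : ℝ) + 1) ^ ((3 : ℝ) / 2) * Real.exp (-(((j : ℝ) + 1) * s))) := by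
  apply Summable.of_norm
  have h2 : Summable (fun n : ℕ => (n : ℝ) ^ 2 * Real.exp (-s * n)) := by
    exact_mod_cast Real.summable_pow_mul_exp_neg_nat_mul 2 hs
  have h2' : Summable (fun j : ℕ => ((j : ℝ) + 1) ^ 2 * Real.exp (-s * ((j : ℝ) + 1))) := by
    have := (summable_nat_add_iff 1).2 h2
    refine this.congr ?_
    intro j
    push_cast
    ring_nf
  refine h2'.of_nonneg_of_le (fun j => norm_nonneg _) (fun j => ?_)
  have hj1 : (1 : ℝ) ≤ (j : ℝ) + 1 := by have := Nat.cast_nonneg (α := ℝ) j; linarith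
  have hpos : (0 : ℝ) < (j : ℝ) + 1 := by positivity
  have hnorm : ‖(-1 : ℝ) ^ j * ((j : ℝ) + 1) ^ ((3 : ℝ) / 2) * Real.exp (-(((j : ℝ) + 1) * s))‖
      = ((j : ℝ) + 1) ^ ((3 : ℝ) / 2) * Real.exp (-(((j : ℝ) + 1) * s)) := by
    rw [norm_mul, norm_mul, norm_pow, norm_neg, norm_one, one_pow, one_mul,
      Real.norm_of_nonneg (Real.rpow_nonneg hpos.le _),
      Real.norm_of_nonneg (Real.exp_nonneg _)]
  rw [hnorm]
  have hle : ((j : ℝ) + 1) ^ ((3 : ℝ) / 2) ≤ ((j : ℝ) + 1) ^ 2 := by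
    have : ((j : ℝ) + 1) ^ ((3 : ℝ) / 2) ≤ ((j : ℝ) + 1) ^ (2 : ℝ) :=
      Real.rpow_le_rpow_of_exponent_le hj1 (by norm_num)
    rwa [Real.rpow_two] at this
  have hexp : Real.exp (-(((j : ℝ) + 1) * s)) = Real.exp (-s * ((j : ℝ) + 1)) := by ring_nf
  rw [hexp]
  exact mul_le_mul_of_nonneg_right hle (Real.exp_nonneg _)

set_option maxHeartbeats 1000000 in
/-- For every real `t > 0`,
`∫_0^∞ w^(-1/2) (∑_{k≥1} (-1)^(k-1) k^(3/2) e^(-k(t+w))) dw = √π e^(-t)/(1+e^(-t))²`,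
where the series `∑_{k≥1} (-1)^(k-1) k^(3/2) e^(-ks)` converges for every `s > 0`.
(The `k`-th term is written with `k = j + 1`, `j : ℕ`, so `(-1)^(k-1) = (-1)^j`.) -/
theorem two_dim_generator_with_logistic_marginals (t : ℝ) (ht : 0 < t) :
    (∀ s : ℝ, 0 < s → Summable (fun j : ℕ =>
      (-1 : ℝ) ^ j * ((j : ℝ) + 1) ^ ((3 : ℝ) / 2) * Real.exp (-(((j : ℝ) + 1) * s)))) ∧
    ∫ w in Ioi (0 : ℝ),
        w ^ (-(1 / 2 : ℝ)) *
          ∑' j : ℕ, (-1 : ℝ) ^ j * ((j : ℝ) + 1) ^ ((3 : ℝ) / 2) *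
            Real.exp (-(((j : ℝ) + 1) * (t + w))) =
      Real.sqrt π * (Real.exp (-t) / (1 + Real.exp (-t)) ^ 2) := by
  refine ⟨fun s hs => aux_summable hs, ?_⟩
  set f : ℕ → ℝ → ℝ := fun j w =>
    w ^ (-(1 / 2 : ℝ)) * ((-1 : ℝ) ^ j * ((j : ℝ) + 1) ^ ((3 : ℝ) / 2) *
      Real.exp (-(((j : ℝ) + 1) * (t + w)))) with hf
  -- each f j, rewritten as constant * base
  have hfd : ∀ j : ℕ, ∀ w : ℝ, f j w =
      ((-1 : ℝ) ^ j * ((j : ℝ) + 1) ^ ((3 : ℝ) / 2) * Real.exp (-(((j : ℝ) + 1) * t))) *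
        (w ^ (-(1 / 2 : ℝ)) * Real.exp (-(((j : ℝ) + 1) * w))) := by
    intro j w
    rw [hf]
    simp only
    rw [show -(((j : ℝ) + 1) * (t + w)) = (-(((j : ℝ) + 1) * t)) + (-(((j : ℝ) + 1) * w)) by ring,
      Real.exp_add]
    ring
  have hcpos : ∀ j : ℕ, (0 : ℝ) < (j : ℝ) + 1 := fun j => by positivity
  -- integrability of each f j
  have hfi : ∀ j : ℕ, IntegrableOn (f j) (Ioi 0) := by
    intro j
    have := (base_integrable (hcpos j)).const_mul
      ((-1 : ℝ) ^ j * ((j : ℝ) + 1) ^ ((3 : ℝ) / 2) * Real.exp (-(((j : ℝ) + 1) * t)))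
    exact IntegrableOn.congr_fun this (fun w _ => (hfd j w).symm) measurableSet_Ioi
  -- value of each integral
  have hfint : ∀ j : ℕ, ∫ w in Ioi (0 : ℝ), f j w =
      Real.sqrt π * ((-1 : ℝ) ^ j * ((j : ℝ) + 1) * Real.exp (-(((j : ℝ) + 1) * t))) := by
    intro j
    calc ∫ w in Ioi (0 : ℝ), f j w
        = ∫ w in Ioi (0 : ℝ),
            ((-1 : ℝ) ^ j * ((j : ℝ) + 1) ^ ((3 : ℝ) / 2) * Real.exp (-(((j : ℝ) + 1) * t))) *
              (w ^ (-(1 / 2 : ℝ)) * Real.exp (-(((j : ℝ) + 1) * w))) := by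
          exact setIntegral_congr_fun measurableSet_Ioi fun w _ => hfd j w
      _ = ((-1 : ℝ) ^ j * ((j : ℝ) + 1) ^ ((3 : ℝ) / 2) * Real.exp (-(((j : ℝ) + 1) * t))) *
            (Real.sqrt π * ((j : ℝ) + 1) ^ (-(1 / 2 : ℝ))) := by
          rw [integral_const_mul, base_integral (hcpos j)]
      _ = Real.sqrt π * ((-1 : ℝ) ^ j * ((j : ℝ) + 1) * Real.exp (-(((j : ℝ) + 1) * t))) := by
          have : ((j : ℝ) + 1) ^ ((3 : ℝ) / 2) * ((j : ℝ) + 1) ^ (-(1 / 2 : ℝ)) = (j : ℝ) + 1 := by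
            rw [← Real.rpow_add (hcpos j)]
            norm_num
          linear_combination (Real.sqrt π * ((-1 : ℝ) ^ j *
            Real.exp (-(((j : ℝ) + 1) * t)))) * this
  -- summability of (j+1) e^{-(j+1)t}
  have hsum1 : Summable (fun j : ℕ => ((j : ℝ) + 1) * Real.exp (-(((j : ℝ) + 1) * t))) := by
    have h1 : Summable (fun n : ℕ => (n : ℝ) ^ 1 * Real.exp (-t * n)) := by
      exact_mod_cast Real.summable_pow_mul_exp_neg_nat_mul 1 ht
    have := (summable_nat_add_iff 1).2 h1
    refine this.congr fun j => ?_
    push_cast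
    ring_nf
  -- norm integral value
  have hnval : ∀ j : ℕ, (∫⁻ w, ‖f j w‖₊ ∂(volume.restrict (Ioi 0))) =
      ENNReal.ofReal (Real.sqrt π * (((j : ℝ) + 1) * Real.exp (-(((j : ℝ) + 1) * t)))) := by
    intro j
    rw [show (∫⁻ w, (‖f j w‖₊ : ENNReal) ∂(volume.restrict (Ioi 0))) = ∫⁻ w, ‖f j w‖ₑ ∂(volume.restrict (Ioi 0)) from rfl,
      ← ofReal_integral_norm_eq_lintegral_enorm (hfi j)]
    congr 1
    calc ∫ w in Ioi (0 : ℝ), ‖f j w‖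
        = ∫ w in Ioi (0 : ℝ),
            (((j : ℝ) + 1) ^ ((3 : ℝ) / 2) * Real.exp (-(((j : ℝ) + 1) * t))) *
              (w ^ (-(1 / 2 : ℝ)) * Real.exp (-(((j : ℝ) + 1) * w))) := by
          refine setIntegral_congr_fun measurableSet_Ioi fun w hw => ?_
          rw [hfd j w, norm_mul, norm_mul, norm_mul, norm_pow, norm_neg, norm_one, one_pow,
            one_mul, norm_mul,
            Real.norm_of_nonneg (Real.rpow_nonneg (hcpos j).le _),
            Real.norm_of_nonneg (Real.exp_nonneg _),
            Real.norm_of_nonneg (Real.rpow_nonneg (le_of_lt hw) _),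
            Real.norm_of_nonneg (Real.exp_nonneg _)]
      _ = (((j : ℝ) + 1) ^ ((3 : ℝ) / 2) * Real.exp (-(((j : ℝ) + 1) * t))) *
            (Real.sqrt π * ((j : ℝ) + 1) ^ (-(1 / 2 : ℝ))) := by
          rw [integral_const_mul, base_integral (hcpos j)]
      _ = Real.sqrt π * (((j : ℝ) + 1) * Real.exp (-(((j : ℝ) + 1) * t))) := by
          have h32 : ((j : ℝ) + 1) ^ ((3 : ℝ) / 2) * ((j : ℝ) + 1) ^ (-(1 / 2 : ℝ))
              = (j : ℝ) + 1 := by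
            rw [← Real.rpow_add (hcpos j)]
            norm_num
          linear_combination (Real.sqrt π * Real.exp (-(((j : ℝ) + 1) * t))) * h32
  -- finiteness for integral_tsum
  have hne : (∑' j : ℕ, ∫⁻ w, ‖f j w‖₊ ∂(volume.restrict (Ioi 0))) ≠ ⊤ := by
    have : (∑' j : ℕ, ∫⁻ w, ‖f j w‖₊ ∂(volume.restrict (Ioi 0))) =
        ENNReal.ofReal (∑' j : ℕ,
          Real.sqrt π * (((j : ℝ) + 1) * Real.exp (-(((j : ℝ) + 1) * t)))) := by
      rw [ENNReal.ofReal_tsum_of_nonneg (fun j => by positivity) (hsum1.mul_left _)]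
      exact tsum_congr hnval
    rw [this]
    exact ENNReal.ofReal_ne_top
  -- the alternating sum
  set x := Real.exp (-t) with hxdef
  have hx0 : 0 < x := Real.exp_pos _
  have hx1 : x < 1 := Real.exp_lt_one_iff.2 (by linarith)
  have hr : ‖(-x : ℝ)‖ < 1 := by
    rw [norm_neg, Real.norm_of_nonneg hx0.le]; exact hx1
  have hS0 := hasSum_coe_mul_geometric_of_norm_lt_one hr
  have hshift : HasSum (fun j : ℕ => (((j : ℕ) + 1 : ℕ) : ℝ) * (-x) ^ ((j : ℕ) + 1))
      ((-x) / (1 - (-x)) ^ 2) := by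
    refine (hasSum_nat_add_iff (f := fun n : ℕ => (n : ℝ) * (-x) ^ n) 1).2 ?_
    simpa using hS0
  have hterm : ∀ j : ℕ, (-1 : ℝ) ^ j * ((j : ℝ) + 1) * Real.exp (-(((j : ℝ) + 1) * t)) =
      -((((j : ℕ) + 1 : ℕ) : ℝ) * (-x) ^ ((j : ℕ) + 1)) := by
    intro j
    have hx : Real.exp (-(((j : ℝ) + 1) * t)) = x ^ (j + 1) := by
      rw [hxdef, ← Real.exp_nat_mul]
      congr 1
      push_cast
      ring
    rw [hx, neg_pow, pow_succ]
    push_cast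
    ring
  have hS : HasSum (fun j : ℕ => (-1 : ℝ) ^ j * ((j : ℝ) + 1) * Real.exp (-(((j : ℝ) + 1) * t)))
      (x / (1 + x) ^ 2) := by
    have heq : (fun j : ℕ => (-1 : ℝ) ^ j * ((j : ℝ) + 1) * Real.exp (-(((j : ℝ) + 1) * t)))
        = fun j : ℕ => -((((j : ℕ) + 1 : ℕ) : ℝ) * (-x) ^ ((j : ℕ) + 1)) := funext hterm
    rw [heq]
    have hv : (x / (1 + x) ^ 2 : ℝ) = -((-x) / (1 - (-x)) ^ 2) := by ring
    rw [hv]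
    exact hshift.neg
  -- put it together
  calc ∫ w in Ioi (0 : ℝ),
        w ^ (-(1 / 2 : ℝ)) *
          ∑' j : ℕ, (-1 : ℝ) ^ j * ((j : ℝ) + 1) ^ ((3 : ℝ) / 2) *
            Real.exp (-(((j : ℝ) + 1) * (t + w)))
      = ∫ w in Ioi (0 : ℝ), ∑' j : ℕ, f j w := by
        refine integral_congr_ae (Filter.Eventually.of_forall fun w => ?_)
        exact (tsum_mul_left).symm
    _ = ∑' j : ℕ, ∫ w in Ioi (0 : ℝ), f j w :=
        integral_tsum (fun j => (hfi j).aestronglyMeasurable) hne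
    _ = ∑' j : ℕ, Real.sqrt π *
          ((-1 : ℝ) ^ j * ((j : ℝ) + 1) * Real.exp (-(((j : ℝ) + 1) * t))) := by
        exact tsum_congr fun j => hfint j
    _ = Real.sqrt π * ∑' j : ℕ,
          (-1 : ℝ) ^ j * ((j : ℝ) + 1) * Real.exp (-(((j : ℝ) + 1) * t)) := tsum_mul_left
    _ = Real.sqrt π * (Real.exp (-t) / (1 + Real.exp (-t)) ^ 2) := by
        rw [hS.tsum_eq]
end

section
/- Let a, b, r > 0, let n be a positive integer with n/2 > r, and let l > 0 be real. Let R be the random variable on (0, ∞) with probability density \(f_R(v)= v^{n/2-1} g(v)\,\big/\int_0^{\infty}t^{n/2-1}g(t)\,dt\), where \(g(u)=\frac{e^{-bu}}{(1+e^{-au})^{r}}\). Then \(E(R^{l}) = a^{-l}\,\frac{\Gamma(n/2+l)\,\sum_{k=0}^{\infty}\frac{\Gamma(r+k)}{\Gamma(r)k!}\frac{(-1)^{k}}{(k+b/a)^{n/2+l}}}{\Gamma(n/2)\,\sum_{k=0}^{\infty}\frac{\Gamma(r+k)}{\Gamma(r)k!}\frac{(-1)^{k}}{(k+b/a)^{n/2}}}\),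 where both series converge absolutely. -/
open Real MeasureTheory Set

namespace RMF

noncomputable def w (r : ℝ) (k : ℕ) : ℝ :=
  Real.Gamma (r + k) / (Real.Gamma r * (k.factorial : ℝ))


lemma w_zero {r : ℝ} (hr : 0 < r) : w r 0 = 1 := by
  simp [w, div_self (ne_of_gt (Real.Gamma_pos_of_pos hr))]

lemma w_pos {r : ℝ} (hr : 0 < r) (k : ℕ) : 0 < w r k := by
  have h1 : 0 < Real.Gamma (r + k) := Real.Gamma_pos_of_pos (by positivity)
  have h2 : 0 < Real.Gamma r := Real.Gamma_pos_of_pos hr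
  have h3 : (0:ℝ) < k.factorial := by exact_mod_cast k.factorial_pos
  exact div_pos h1 (by positivity)

lemma w_succ {r : ℝ} (hr : 0 < r) (k : ℕ) :
    w r (k + 1) = w r k * ((r + k) / (k + 1)) := by
  have h : Real.Gamma (r + (k + 1 : ℕ)) = (r + k) * Real.Gamma (r + k) := by
    have : r + ((k : ℝ) + 1) = (r + k) + 1 := by ring
    rw [Nat.cast_add, Nat.cast_one, this, Real.Gamma_add_one (by positivity)]
  rw [w, w, h, Nat.factorial_succ]
  have h2 : Real.Gamma r > 0 := Real.Gamma_pos_of_pos hr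
  have h3 : (0:ℝ) < k.factorial := by exact_mod_cast k.factorial_pos
  field_simp
  push_cast
  ring

lemma w_prod {r : ℝ} (hr : 0 < r) (k : ℕ) :
    w r k = ∏ i ∈ Finset.range k, ((r + i) / (i + 1)) := by
  induction k with
  | zero => simp [w_zero hr]
  | succ k ih => rw [w_succ hr, Finset.prod_range_succ, ih]

lemma w_le {r : ℝ} (hr : 0 < r) (k : ℕ) :
    w r k ≤ Real.exp |r - 1| * ((k : ℝ) + 1) ^ (r - 1) := by
  have hwpos := w_pos hr k
  have hH : Real.log (w r k) ≤ (r - 1) * (harmonic k : ℝ) := by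
    rw [w_prod hr, Real.log_prod (fun i _ => by positivity)]
    have : (r - 1) * (harmonic k : ℝ) = ∑ i ∈ Finset.range k, (r - 1) / (i + 1) := by
      rw [harmonic]
      push_cast
      rw [Finset.mul_sum]
      exact Finset.sum_congr rfl (fun i _ => by rw [div_eq_mul_inv])
    rw [this]
    refine Finset.sum_le_sum (fun i _ => ?_)
    have hx : (0:ℝ) < (r + i) / (i + 1) := by positivity
    calc Real.log ((r + (i:ℝ)) / (i + 1)) ≤ (r + i) / (i + 1) - 1 :=
          Real.log_le_sub_one_of_pos hx
      _ = (r - 1) / (i + 1) := by field_simp; ring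
  have key : Real.log (w r k) ≤ |r - 1| + (r - 1) * Real.log ((k : ℝ) + 1) := by
    rcases le_or_gt 1 r with h1 | h1
    · have hHa : (harmonic k : ℝ) ≤ 1 + Real.log ((k:ℝ) + 1) := by
        refine (harmonic_le_one_add_log k).trans ?_
        have : Real.log (k : ℝ) ≤ Real.log ((k:ℝ) + 1) := by
          rcases Nat.eq_zero_or_pos k with h | h
          · simp [h]
          · exact Real.log_le_log (by exact_mod_cast h) (by linarith)
        linarith
      calc Real.log (w r k) ≤ (r - 1) * (harmonic k : ℝ) := hH
        _ ≤ (r - 1) * (1 + Real.log ((k:ℝ)+1)) := by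
            apply mul_le_mul_of_nonneg_left hHa (by linarith)
        _ = (r-1) + (r - 1) * Real.log ((k:ℝ)+1) := by ring
        _ ≤ |r - 1| + (r - 1) * Real.log ((k:ℝ)+1) := by
            have := le_abs_self (r - 1); linarith
    · have hHa : Real.log ((k:ℝ) + 1) ≤ (harmonic k : ℝ) := by
        have := log_add_one_le_harmonic k
        push_cast at this ⊢
        convert this using 2
      calc Real.log (w r k) ≤ (r - 1) * (harmonic k : ℝ) := hH
        _ ≤ (r - 1) * Real.log ((k:ℝ)+1) := by
            apply mul_le_mul_of_nonpos_left hHa (by linarith)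
        _ ≤ |r - 1| + (r - 1) * Real.log ((k:ℝ)+1) := by
            have : (0:ℝ) ≤ |r-1| := abs_nonneg _
            linarith
  calc w r k = Real.exp (Real.log (w r k)) := (Real.exp_log hwpos).symm
    _ ≤ Real.exp (|r - 1| + (r - 1) * Real.log ((k:ℝ)+1)) := Real.exp_le_exp.2 key
    _ = Real.exp |r - 1| * ((k : ℝ) + 1) ^ (r - 1) := by
        rw [Real.exp_add, Real.rpow_def_of_pos (by positivity), mul_comm (r-1)]



lemma summable_shift {p : ℝ} (hp : p < -1) :
    Summable (fun k : ℕ => ((k : ℝ) + 1) ^ p) := by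
  have h := Real.summable_nat_rpow.2 hp
  have := (summable_nat_add_iff (f := fun n : ℕ => (n : ℝ) ^ p) 1).2 h
  simpa using this

lemma term_summable {r c s : ℝ} (hr : 0 < r) (hc : 0 < c) (hs : r < s) :
    Summable (fun k : ℕ => w r k / ((k : ℝ) + c) ^ s) := by
  have hs0 : 0 < s := hr.trans hs
  set m := min c 1 with hm
  have hm0 : 0 < m := lt_min hc one_pos
  have hC : ∀ k : ℕ, w r k / ((k : ℝ) + c) ^ s ≤
      (Real.exp |r - 1| * m ^ (-s)) * ((k : ℝ) + 1) ^ (r - 1 - s) := by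
    intro k
    have hk1 : (0:ℝ) < (k : ℝ) + 1 := by positivity
    have hkc : (0:ℝ) < (k : ℝ) + c := by positivity
    have hmk : m * ((k : ℝ) + 1) ≤ (k : ℝ) + c := by
      have h1 : m ≤ c := min_le_left _ _
      have h2 : m ≤ 1 := min_le_right _ _
      nlinarith [Nat.cast_nonneg (α := ℝ) k]
    have hpow : (m * ((k:ℝ)+1)) ^ s ≤ ((k:ℝ) + c) ^ s :=
      Real.rpow_le_rpow (by positivity) hmk hs0.le
    have hinv : ((k:ℝ) + c) ^ s ≥ m ^ s * ((k:ℝ)+1) ^ s := by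
      rw [← Real.mul_rpow hm0.le hk1.le]; exact hpow
    have h1 : w r k / ((k : ℝ) + c) ^ s ≤
        (Real.exp |r - 1| * ((k : ℝ) + 1) ^ (r - 1)) / (m ^ s * ((k:ℝ)+1) ^ s) := by
      apply div_le_div₀ (by positivity) (w_le hr k) (by positivity) hinv
    refine h1.trans (le_of_eq ?_)
    rw [Real.rpow_neg hm0.le, show r - 1 - s = (r-1) + (-s) by ring,
      Real.rpow_add hk1, Real.rpow_neg hk1.le]
    try field_simp
    try ring
  refine Summable.of_nonneg_of_le (fun k => le_of_lt (div_pos (w_pos hr k) (Real.rpow_pos_of_pos (by positivity) s))) hC ?_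
  exact (summable_shift (by linarith)).mul_left _

lemma abs_term {r c s : ℝ} (hr : 0 < r) (hc : 0 < c) (k : ℕ) :
    |w r k * ((-1 : ℝ) ^ k / ((k : ℝ) + c) ^ s)| = w r k / ((k : ℝ) + c) ^ s := by
  have hkc : (0:ℝ) < (k : ℝ) + c := by positivity
  rw [abs_mul, abs_div, abs_pow, abs_neg, abs_one, one_pow,
    abs_of_pos (w_pos hr k), abs_of_pos (Real.rpow_pos_of_pos hkc s)]
  rw [mul_one_div]

lemma summable_abs_term {r c s : ℝ} (hr : 0 < r) (hc : 0 < c) (hs : r < s) :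
    Summable (fun k : ℕ => |w r k * ((-1 : ℝ) ^ k / ((k : ℝ) + c) ^ s)|) := by
  have := term_summable hr hc hs
  refine this.congr (fun k => (abs_term hr hc k).symm)

lemma summable_term {r c s : ℝ} (hr : 0 < r) (hc : 0 < c) (hs : r < s) :
    Summable (fun k : ℕ => w r k * ((-1 : ℝ) ^ k / ((k : ℝ) + c) ^ s)) :=
  (summable_abs_term hr hc hs).of_abs


lemma hasDerivAt_one_add_rpow {p t : ℝ} (ht : -1 < t) :
    HasDerivAt (fun u : ℝ => (1 + u) ^ p) (p * (1 + t) ^ (p - 1)) t := by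
  have h1 : HasDerivAt (fun u : ℝ => 1 + u) 1 t := (hasDerivAt_id t).const_add 1
  have := h1.rpow_const (p := p) (Or.inl (by linarith))
  simpa using this

lemma iterated_deriv_one_add {r : ℝ} (hr : 0 < r) {x : ℝ} (hx0 : 0 < x) :
    ∀ m : ℕ, ∀ t ∈ Icc (0:ℝ) x,
      iteratedDerivWithin m (fun u => (1 + u) ^ (-r)) (Icc 0 x) t
        = (-1) ^ m * (Real.Gamma (r + m) / Real.Gamma r) * (1 + t) ^ (-(r + m)) := by
  intro m
  induction m with
  | zero => intro t ht; simp [div_self (ne_of_gt (Real.Gamma_pos_of_pos hr))]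
  | succ m ih =>
    intro t ht
    have hud : UniqueDiffOn ℝ (Icc (0:ℝ) x) := uniqueDiffOn_Icc hx0
    rw [iteratedDerivWithin_succ]
    rw [derivWithin_congr (f := fun u => (-1) ^ m * (Real.Gamma (r + m) / Real.Gamma r) * (1 + u) ^ (-(r + m))) ih (ih t ht)]
    have hder : HasDerivAt
        (fun u => (-1:ℝ) ^ m * (Real.Gamma (r + m) / Real.Gamma r) * (1 + u) ^ (-(r + m)))
        ((-1:ℝ) ^ m * (Real.Gamma (r + m) / Real.Gamma r) *
          (-(r + m) * (1 + t) ^ (-(r + m) - 1))) t := by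
      exact (hasDerivAt_one_add_rpow (by linarith [ht.1])).const_mul _
    rw [hder.hasDerivWithinAt.derivWithin (hud t ht)]
    have hG : Real.Gamma (r + (m + 1 : ℕ)) = (r + m) * Real.Gamma (r + m) := by
      have h1 : r + ((m : ℝ) + 1) = (r + m) + 1 := by ring
      push_cast
      rw [h1, Real.Gamma_add_one (by positivity)]
    rw [hG]
    push_cast
    rw [show -(r + ((m:ℝ) + 1)) = -(r + m) - 1 by ring]
    ring



lemma summable_geom_w {r x : ℝ} (hr : 0 < r) (hx0 : 0 < x) (hx1 : x < 1) :
    Summable (fun k : ℕ => w r k * x ^ k) := by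
  apply summable_of_ratio_test_tendsto_lt_one hx1
  · filter_upwards with k
    exact ne_of_gt (mul_pos (w_pos hr k) (pow_pos hx0 k))
  · have h1 : ∀ k : ℕ, ‖w r (k+1) * x ^ (k+1)‖ / ‖w r k * x ^ k‖
        = (1 + (r - 1) / (k + 1)) * x := by
      intro k
      have hw := w_pos hr k
      have hw1 := w_pos hr (k+1)
      have hxk := pow_pos hx0 k
      rw [norm_of_nonneg (by positivity), norm_of_nonneg (by positivity),
        w_succ hr, pow_succ]
      have hk1 : ((k:ℝ) + 1) ≠ 0 := by positivity
      field_simp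
      ring
    simp_rw [h1]
    have h2 : Filter.Tendsto (fun k : ℕ => 1 + (r - 1) / ((k:ℝ) + 1)) Filter.atTop (nhds 1) := by
      have := tendsto_one_div_add_atTop_nhds_zero_nat (𝕜 := ℝ)
      have h3 := Filter.Tendsto.const_mul (r - 1) this
      rw [mul_zero] at h3
      have h4 := Filter.Tendsto.const_add 1 h3
      rw [add_zero] at h4
      refine h4.congr (fun k => ?_)
      rw [mul_one_div]
    have := h2.mul_const x
    rwa [one_mul] at this


lemma taylor_eval {r x : ℝ} (hr : 0 < r) (hx0 : 0 < x) (K : ℕ) :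
    taylorWithinEval (fun u => (1 + u) ^ (-r)) K (Icc 0 x) 0 x
      = ∑ k ∈ Finset.range (K + 1), w r k * ((-1) ^ k * x ^ k) := by
  rw [taylor_within_apply]
  refine Finset.sum_congr rfl (fun k hk => ?_)
  rw [iterated_deriv_one_add hr hx0 k 0 (left_mem_Icc.2 hx0.le)]
  rw [add_zero, Real.one_rpow, mul_one, smul_eq_mul, w]
  field_simp
  ring

lemma remainder_bound {r x : ℝ} (hr : 0 < r) (hx0 : 0 < x) (hx1 : x < 1) (K : ℕ) :
    |(1 + x) ^ (-r) - ∑ k ∈ Finset.range (K + 1), w r k * ((-1) ^ k * x ^ k)|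
      ≤ w r (K + 1) * x ^ (K + 1) := by
  set f : ℝ → ℝ := fun u => (1 + u) ^ (-r) with hf
  have hcont : ContDiffOn ℝ K f (Icc 0 x) := by
    refine ContDiffOn.rpow (contDiffOn_const.add contDiffOn_id) contDiffOn_const ?_
    intro t ht
    have := ht.1
    positivity
  have hdiff : DifferentiableOn ℝ (iteratedDerivWithin K f (Icc 0 x)) (Ioo 0 x) := by
    intro t ht
    have hG : DifferentiableWithinAt ℝ
        (fun u => (-1:ℝ) ^ K * (Real.Gamma (r + K) / Real.Gamma r) * (1 + u) ^ (-(r + K)))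
        (Ioo 0 x) t :=
      ((hasDerivAt_one_add_rpow (p := -(r + K)) (by linarith [ht.1])).const_mul
        _).differentiableAt.differentiableWithinAt
    exact hG.congr (fun y hy => iterated_deriv_one_add hr hx0 K y (Ioo_subset_Icc_self hy))
      (iterated_deriv_one_add hr hx0 K t (Ioo_subset_Icc_self ht))
  have hicc : uIcc (0:ℝ) x = Icc 0 x := uIcc_of_le hx0.le
  have hioo : uIoo (0:ℝ) x = Ioo 0 x := uIoo_of_le hx0.le
  rw [← hicc] at hcont
  rw [← hicc, ← hioo] at hdiff
  obtain ⟨x', hx', hrem⟩ := taylor_mean_remainder_lagrange hx0.ne hcont hdiff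
  rw [hicc] at hrem
  rw [hioo] at hx'
  rw [taylor_eval hr hx0 K] at hrem
  rw [hrem, iterated_deriv_one_add hr hx0 (K+1) x' (Ioo_subset_Icc_self hx'), sub_zero]
  have h1x : (0:ℝ) < 1 + x' := by linarith [hx'.1]
  set A : ℝ := Real.Gamma (r + ((K+1 : ℕ):ℝ)) / Real.Gamma r with hA
  set B : ℝ := (1 + x') ^ (-(r + ((K+1 : ℕ):ℝ))) with hB
  set c : ℝ := (((K+1).factorial : ℕ) : ℝ) with hc
  have hApos : 0 < A := div_pos (Real.Gamma_pos_of_pos (by positivity)) (Real.Gamma_pos_of_pos hr)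
  have hBpos : 0 < B := Real.rpow_pos_of_pos h1x _
  have hcpos : 0 < c := by
    rw [hc]; exact_mod_cast (K+1).factorial_pos
  have hB1 : B ≤ 1 := by
    apply Real.rpow_le_one_of_one_le_of_nonpos (by linarith [hx'.1])
    have : (0:ℝ) ≤ ((K+1 : ℕ):ℝ) := by positivity
    linarith
  have hxp : (0:ℝ) < x ^ (K+1) := pow_pos hx0 _
  have hwv : w r (K+1) = A / c := by
    rw [w, hA, hc, div_div]
  have habs : |(-1:ℝ) ^ (K+1) * A * B * x ^ (K+1) / c| = A * B * x ^ (K+1) / c := by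
    rw [abs_div, abs_mul, abs_mul, abs_mul, abs_pow, abs_neg, abs_one, one_pow, one_mul,
      abs_of_pos hApos, abs_of_pos hBpos, abs_of_pos hxp, abs_of_pos hcpos]
  rw [habs, hwv]
  calc A * B * x ^ (K+1) / c = (A / c) * x ^ (K+1) * B := by ring
    _ ≤ (A / c) * x ^ (K+1) * 1 := by
        apply mul_le_mul_of_nonneg_left hB1 (by positivity)
    _ = A / c * x ^ (K+1) := by ring

lemma hasSum_binomial {r x : ℝ} (hr : 0 < r) (hx0 : 0 < x) (hx1 : x < 1) :
    HasSum (fun k : ℕ => w r k * ((-1) ^ k * x ^ k)) ((1 + x) ^ (-r)) := by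
  have hsum0 : Summable (fun k : ℕ => w r k * x ^ k) := summable_geom_w hr hx0 hx1
  have hsum : Summable (fun k : ℕ => w r k * ((-1) ^ k * x ^ k)) := by
    apply Summable.of_abs
    refine hsum0.congr (fun k => ?_)
    rw [abs_mul, abs_mul, abs_pow, abs_neg, abs_one, one_pow, one_mul,
      abs_of_pos (w_pos hr k), abs_of_pos (pow_pos hx0 k)]
  have hS := hsum.hasSum
  have hT : Filter.Tendsto (fun K => ∑ k ∈ Finset.range K, w r k * ((-1) ^ k * x ^ k))
      Filter.atTop (nhds (∑' k, w r k * ((-1) ^ k * x ^ k))) := hS.tendsto_sum_nat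
  have hT2 := hT.comp (Filter.tendsto_add_atTop_nat 1)
  have hbound0 : Filter.Tendsto (fun K : ℕ => w r (K+1) * x ^ (K+1)) Filter.atTop (nhds 0) :=
    hsum0.tendsto_atTop_zero.comp (Filter.tendsto_add_atTop_nat 1)
  have hdiff0 : Filter.Tendsto
      (fun K : ℕ => (∑ k ∈ Finset.range (K+1), w r k * ((-1) ^ k * x ^ k)) - (1 + x) ^ (-r))
      Filter.atTop (nhds 0) := by
    apply squeeze_zero_norm (fun K => ?_) hbound0
    rw [Real.norm_eq_abs, abs_sub_comm]
    exact remainder_bound hr hx0 hx1 K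
  have hT3 : Filter.Tendsto
      (fun K : ℕ => ∑ k ∈ Finset.range (K+1), w r k * ((-1) ^ k * x ^ k))
      Filter.atTop (nhds ((1 + x) ^ (-r))) := by
    have := hdiff0.add_const ((1 + x) ^ (-r))
    rw [zero_add] at this
    refine this.congr (fun K => by ring)
  have := tendsto_nhds_unique hT2 hT3
  rwa [this] at hS


lemma integrable_piece {s c : ℝ} (hs : 0 < s) (hc : 0 < c) :
    IntegrableOn (fun v : ℝ => v ^ (s - 1) * Real.exp (-(c * v))) (Ioi 0) := by
  have := integrableOn_rpow_mul_exp_neg_mul_rpow (p := 1) (s := s - 1) (b := c)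
    (by linarith) one_pos hc
  refine this.congr_fun (fun v hv => ?_) measurableSet_Ioi
  simp only [Real.rpow_one]
  ring_nf

lemma gamma_piece {s c : ℝ} (hs : 0 < s) (hc : 0 < c) :
    ∫ v in Ioi (0:ℝ), v ^ (s - 1) * Real.exp (-(c * v)) = (1 / c) ^ s * Real.Gamma s :=
  integral_rpow_mul_exp_neg_mul_Ioi hs hc

lemma main_integral {r c s : ℝ} (hr : 0 < r) (hc : 0 < c) (hs : r < s) :
    ∫ v in Ioi (0:ℝ), v ^ (s - 1) * (Real.exp (-(c * v)) / (1 + Real.exp (-v)) ^ r)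
      = Real.Gamma s * ∑' k : ℕ, w r k * ((-1:ℝ) ^ k / ((k : ℝ) + c) ^ s) := by
  have hs0 : 0 < s := hr.trans hs
  set F : ℕ → ℝ → ℝ :=
    fun k v => (w r k * (-1:ℝ) ^ k) * (v ^ (s - 1) * Real.exp (-(((k:ℝ) + c) * v))) with hF
  have hFmeas : ∀ k, AEStronglyMeasurable (F k) (volume.restrict (Ioi 0)) := by
    intro k
    apply AEStronglyMeasurable.const_mul
    apply ContinuousOn.aestronglyMeasurable _ measurableSet_Ioi
    exact (continuousOn_id.rpow_const (fun x hx => Or.inl (ne_of_gt hx))).mul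
      (Continuous.continuousOn (by continuity))
  have hFint : ∀ k : ℕ, IntegrableOn (F k) (Ioi 0) := fun k =>
    ((integrable_piece hs0 (by positivity)).const_mul _)
  have hkc : ∀ k : ℕ, (0:ℝ) < (k:ℝ) + c := fun k => by positivity
  have hFI : ∀ k : ℕ, ∫ v in Ioi (0:ℝ), F k v
      = (w r k * (-1:ℝ) ^ k) * ((1 / ((k:ℝ) + c)) ^ s * Real.Gamma s) := by
    intro k
    rw [hF]
    rw [integral_const_mul, gamma_piece hs0 (hkc k)]
  have hnorm : ∀ k : ℕ, ∫ v in Ioi (0:ℝ), ‖F k v‖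
      = w r k * ((1 / ((k:ℝ) + c)) ^ s * Real.Gamma s) := by
    intro k
    have : ∀ v ∈ Ioi (0:ℝ), ‖F k v‖ = w r k * (v ^ (s - 1) * Real.exp (-(((k:ℝ) + c) * v))) := by
      intro v hv
      have hv0 : (0:ℝ) < v := hv
      rw [hF, norm_mul, norm_mul, norm_mul]
      simp only [norm_pow, norm_neg, norm_one, one_pow, mul_one]
      rw [Real.norm_eq_abs, Real.norm_eq_abs, Real.norm_eq_abs,
        abs_of_pos (w_pos hr k), abs_of_pos (Real.rpow_pos_of_pos hv0 _),
        abs_of_pos (Real.exp_pos _)]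
    rw [setIntegral_congr_fun measurableSet_Ioi this, integral_const_mul,
      gamma_piece hs0 (hkc k)]
  have hsummable : Summable (fun k : ℕ => w r k * ((1 / ((k:ℝ) + c)) ^ s * Real.Gamma s)) := by
    have h1 := (term_summable hr hc hs).mul_right (Real.Gamma s)
    refine h1.congr (fun k => ?_)
    rw [div_mul_eq_mul_div, div_eq_mul_inv, one_div, Real.inv_rpow (hkc k).le]
    ring
  have hlint : ∑' k : ℕ, ∫⁻ v, ‖F k v‖ₑ ∂(volume.restrict (Ioi 0)) ≠ ⊤ := by
    have heq : ∀ k : ℕ, ∫⁻ v, ‖F k v‖ₑ ∂(volume.restrict (Ioi 0))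
        = ENNReal.ofReal (w r k * ((1 / ((k:ℝ) + c)) ^ s * Real.Gamma s)) := by
      intro k
      rw [← MeasureTheory.ofReal_integral_norm_eq_lintegral_enorm (hFint k), hnorm k]
    rw [tsum_congr heq, ← ENNReal.ofReal_tsum_of_nonneg
      (fun k => mul_nonneg (w_pos hr k).le (by positivity)) hsummable]
    exact ENNReal.ofReal_ne_top
  have key := MeasureTheory.integral_tsum hFmeas hlint
  have hL : ∫ v in Ioi (0:ℝ), ∑' k : ℕ, F k v
      = ∫ v in Ioi (0:ℝ), v ^ (s - 1) * (Real.exp (-(c * v)) / (1 + Real.exp (-v)) ^ r) := by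
    refine setIntegral_congr_fun measurableSet_Ioi (fun v hv => ?_)
    have hv0 : (0:ℝ) < v := hv
    have hx0 : 0 < Real.exp (-v) := Real.exp_pos _
    have hx1 : Real.exp (-v) < 1 := by
      rw [Real.exp_lt_one_iff]
      linarith
    have hbin := (hasSum_binomial hr hx0 hx1).mul_left (v ^ (s - 1) * Real.exp (-(c * v)))
    have hfe : ∀ k : ℕ, v ^ (s - 1) * Real.exp (-(c * v)) *
        (w r k * ((-1:ℝ) ^ k * Real.exp (-v) ^ k)) = F k v := by
      intro k
      rw [hF]
      have h1 : Real.exp (-v) ^ k = Real.exp (-((k:ℝ) * v)) := by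
        rw [← Real.exp_nat_mul]
        ring_nf
      have h2 : Real.exp (-((k:ℝ) * v)) * Real.exp (-(c * v)) = Real.exp (-(((k:ℝ) + c) * v)) := by
        rw [← Real.exp_add]
        ring_nf
      rw [h1]
      calc v ^ (s - 1) * Real.exp (-(c * v)) * (w r k * ((-1:ℝ) ^ k * Real.exp (-((k:ℝ) * v))))
          = (w r k * (-1:ℝ) ^ k) * (v ^ (s - 1) *
              (Real.exp (-((k:ℝ) * v)) * Real.exp (-(c * v)))) := by ring
        _ = _ := by rw [h2]
    rw [funext hfe] at hbin
    rw [hbin.tsum_eq]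
    have h3 : (0:ℝ) < 1 + Real.exp (-v) := by linarith
    rw [Real.rpow_neg h3.le]
    field_simp
  have hR : ∑' k : ℕ, ∫ v in Ioi (0:ℝ), F k v
      = Real.Gamma s * ∑' k : ℕ, w r k * ((-1:ℝ) ^ k / ((k : ℝ) + c) ^ s) := by
    rw [tsum_congr (fun k => ?_), tsum_mul_left]
    rw [hFI k, one_div, Real.inv_rpow (hkc k).le, ← one_div]
    ring
  rw [← hL, key, hR]


lemma scaled_integral {a b r s : ℝ} (ha : 0 < a) (hb : 0 < b) (hs : 0 < s) (hr : 0 < r) :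
    ∫ v in Ioi (0:ℝ), v ^ (s - 1) * (Real.exp (-(b * v)) / (1 + Real.exp (-(a * v))) ^ r)
      = a ^ (-s) * ∫ u in Ioi (0:ℝ),
          u ^ (s - 1) * (Real.exp (-((b / a) * u)) / (1 + Real.exp (-u)) ^ r) := by
  set G : ℝ → ℝ :=
    fun u => u ^ (s - 1) * (Real.exp (-((b / a) * u)) / (1 + Real.exp (-u)) ^ r) with hG
  have hcv := integral_comp_mul_left_Ioi G 0 ha
  rw [mul_zero] at hcv
  have hpt : ∀ v ∈ Ioi (0:ℝ),
      v ^ (s - 1) * (Real.exp (-(b * v)) / (1 + Real.exp (-(a * v))) ^ r)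
        = a ^ (-(s - 1)) * G (a * v) := by
    intro v hv
    have hv0 : (0:ℝ) < v := hv
    rw [hG]
    have h1 : (a * v) ^ (s - 1) = a ^ (s - 1) * v ^ (s - 1) :=
      Real.mul_rpow ha.le hv0.le
    have h2 : b / a * (a * v) = b * v := by field_simp
    simp only [h2, h1]
    rw [Real.rpow_neg ha.le]
    have h3 : a ^ (s - 1) ≠ 0 := ne_of_gt (Real.rpow_pos_of_pos ha _)
    field_simp
  rw [setIntegral_congr_fun measurableSet_Ioi hpt, integral_const_mul, hcv, smul_eq_mul]
  rw [← mul_assoc, ← Real.rpow_neg_one a, ← Real.rpow_add ha]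
  have : -(s - 1) + -1 = -s := by ring
  rw [this]


end RMF

open RMF in
/-- Let `a, b, r > 0`, let `n` be a positive integer with `n/2 > r`, and let
`l > 0`.  Let `R` have density `f_R(v) = v^(n/2-1) g(v) / ∫_0^∞ t^(n/2-1) g(t) dt` on
`(0,∞)` with `g(u) = e^(-bu)/(1+e^(-au))^r`.  Then
`E(R^l) = a^(-l) Γ(n/2+l) Φ*_r(-1, n/2+l, b/a) / (Γ(n/2) Φ*_r(-1, n/2, b/a))`
with both Hurwitz–Lerch series (written out explicitly) converging absolutely. -/
theorem radial_moment_formula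
    (a b r l : ℝ) (n : ℕ) (hn : 0 < n) (ha : 0 < a) (hb : 0 < b) (hr : 0 < r)
    (hl : 0 < l) (hnr : r < (n : ℝ) / 2)
    (g : ℝ → ℝ) (hg : g = fun u => Real.exp (-(b * u)) / (1 + Real.exp (-(a * u))) ^ r) :
    Summable (fun k : ℕ =>
      |Real.Gamma (r + (k : ℝ)) / (Real.Gamma r * (k.factorial : ℝ)) *
        ((-1 : ℝ) ^ k / ((k : ℝ) + b / a) ^ ((n : ℝ) / 2 + l))|) ∧
    Summable (fun k : ℕ =>
      |Real.Gamma (r + (k : ℝ)) / (Real.Gamma r * (k.factorial : ℝ)) *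
        ((-1 : ℝ) ^ k / ((k : ℝ) + b / a) ^ ((n : ℝ) / 2))|) ∧
    ∫ v in Ioi (0 : ℝ),
        v ^ l * (v ^ ((n : ℝ) / 2 - 1) * g v /
          ∫ t in Ioi (0 : ℝ), t ^ ((n : ℝ) / 2 - 1) * g t) =
      a ^ (-l) *
        (Real.Gamma ((n : ℝ) / 2 + l) *
          ∑' k : ℕ, Real.Gamma (r + (k : ℝ)) / (Real.Gamma r * (k.factorial : ℝ)) *
            ((-1 : ℝ) ^ k / ((k : ℝ) + b / a) ^ ((n : ℝ) / 2 + l))) /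
        (Real.Gamma ((n : ℝ) / 2) *
          ∑' k : ℕ, Real.Gamma (r + (k : ℝ)) / (Real.Gamma r * (k.factorial : ℝ)) *
            ((-1 : ℝ) ^ k / ((k : ℝ) + b / a) ^ ((n : ℝ) / 2))) := by
  have hc : 0 < b / a := div_pos hb ha
  set s₀ : ℝ := (n : ℝ) / 2 with hs₀
  set s₁ : ℝ := (n : ℝ) / 2 + l with hs₁
  have hs₀pos : 0 < s₀ := hr.trans hnr
  have hs₁r : r < s₁ := by rw [hs₁]; linarith
  have hs₁pos : 0 < s₁ := hr.trans hs₁r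
  refine ⟨summable_abs_term hr hc hs₁r, summable_abs_term hr hc hnr, ?_⟩
  -- the integral identity
  have hnum : ∫ v in Ioi (0:ℝ), v ^ (s₁ - 1) * g v
      = a ^ (-s₁) * (Real.Gamma s₁ * ∑' k : ℕ, w r k * ((-1:ℝ) ^ k / ((k : ℝ) + b / a) ^ s₁)) := by
    rw [hg, scaled_integral ha hb hs₁pos hr, main_integral hr hc hs₁r]
  have hden : ∫ t in Ioi (0:ℝ), t ^ (s₀ - 1) * g t
      = a ^ (-s₀) * (Real.Gamma s₀ * ∑' k : ℕ, w r k * ((-1:ℝ) ^ k / ((k : ℝ) + b / a) ^ s₀)) := by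
    rw [hg, scaled_integral ha hb hs₀pos hr, main_integral hr hc hnr]
  set Φ₁ : ℝ := ∑' k : ℕ, w r k * ((-1:ℝ) ^ k / ((k : ℝ) + b / a) ^ s₁) with hΦ₁
  set Φ₀ : ℝ := ∑' k : ℕ, w r k * ((-1:ℝ) ^ k / ((k : ℝ) + b / a) ^ s₀) with hΦ₀
  set D : ℝ := ∫ t in Ioi (0:ℝ), t ^ (s₀ - 1) * g t with hD
  have hLHS : ∫ v in Ioi (0 : ℝ), v ^ l * (v ^ (s₀ - 1) * g v / D)
      = (∫ v in Ioi (0:ℝ), v ^ (s₁ - 1) * g v) / D := by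
    rw [← integral_div]
    refine setIntegral_congr_fun measurableSet_Ioi (fun v hv => ?_)
    have hv0 : (0:ℝ) < v := hv
    have : v ^ l * v ^ (s₀ - 1) = v ^ (s₁ - 1) := by
      rw [← Real.rpow_add hv0, hs₁, hs₀]
      ring_nf
    rw [div_eq_mul_inv, div_eq_mul_inv, ← mul_assoc, ← mul_assoc, this]
  show ∫ v in Ioi (0 : ℝ), v ^ l * (v ^ (s₀ - 1) * g v / D)
      = a ^ (-l) * (Real.Gamma s₁ * Φ₁) / (Real.Gamma s₀ * Φ₀)
  rw [hLHS, hnum, hden]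
  have has : a ^ (-s₁) = a ^ (-s₀) * a ^ (-l) := by
    rw [← Real.rpow_add ha]
    congr 1
    rw [hs₁]
    ring
  rw [has]
  have hane : a ^ (-s₀) ≠ 0 := ne_of_gt (Real.rpow_pos_of_pos ha _)
  rw [mul_assoc, mul_div_mul_left _ _ hane, mul_div_assoc]
end
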